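/- Let (A,d,⟨·,·⟩) be a cyclic cochain complex and B ⊆ A a quasi-isomorphic cyclic subcomplex. Then there exists a Hodge decomposition A = H ⊕ im d ⊕ C which is relative to B, such that the unique symmetric projection π_B : A → A with image B and kernel B^⊥ respects the Hodge decompositions of A and of B (i.e. π_B(H) ⊆ B∩H and π_B(C) ⊆ B∩C). -/

import Mathlib

noncomputable section

/-- A cochain complex over `ℝ` (with a `ℤ`-grading realized as an internal direct sum
of submodules) together with a graded-symmetric pairing of degree `n` compatible with
the differential. -/
structure PairedComplex (A : Type*) [AddCommGroup A] [Module ℝ A] where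
  /-- the grading `A = ⊕ᵢ Aⁱ` -/
  grading : ℤ → Submodule ℝ A
  internal : DirectSum.IsInternal grading
  /-- the differential -/
  d : A →ₗ[ℝ] A
  d_degree : ∀ i : ℤ, ∀ x ∈ grading i, d x ∈ grading (i + 1)
  d_sq : ∀ x : A, d (d x) = 0
  /-- the degree of the pairing -/
  n : ℤ
  /-- the pairing -/
  pair : A →ₗ[ℝ] A →ₗ[ℝ] ℝ
  pair_degree : ∀ i j : ℤ, i + j ≠ n → ∀ x ∈ grading i, ∀ y ∈ grading j, pair x y = 0
  pair_symm : ∀ i j : ℤ, ∀ x ∈ grading i, ∀ y ∈ grading j,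
      pair x y = (-1 : ℝ) ^ (i * j) * pair y x
  pair_d : ∀ i : ℤ, ∀ x ∈ grading i, ∀ y : A,
      pair (d x) y = (-1 : ℝ) ^ (1 + i) * pair x (d y)

namespace PairedComplex

variable {A : Type*} [AddCommGroup A] [Module ℝ A] (X : PairedComplex A)

/-- `f` is homogeneous of degree `k`. -/
def IsDegree (f : A →ₗ[ℝ] A) (k : ℤ) : Prop :=
  ∀ i : ℤ, ∀ x ∈ X.grading i, f x ∈ X.grading (i + k)

/-- A chain map: a degree `0` map commuting with the differential. -/
def IsChainMap (f : A →ₗ[ℝ] A) : Prop :=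
  X.IsDegree f 0 ∧ ∀ x : A, f (X.d x) = X.d (f x)

/-- A projection: an idempotent chain map. -/
def IsProjection (p : A →ₗ[ℝ] A) : Prop :=
  X.IsChainMap p ∧ ∀ x : A, p (p x) = p x

/-- The projection `π_P = id + d∘P + P∘d` associated to a homotopy operator `P`. -/
def assocProj (P : A →ₗ[ℝ] A) : A →ₗ[ℝ] A :=
  LinearMap.id + X.d ∘ₗ P + P ∘ₗ X.d

/-- A homotopy operator: a degree `-1` map such that `−d∘P − P∘d` is a projection. -/
def IsHomotopyOperator (P : A →ₗ[ℝ] A) : Prop :=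
  X.IsDegree P (-1) ∧ X.IsProjection (-(X.d ∘ₗ P) - P ∘ₗ X.d)

/-- A homotopy operator `P` is special if `P∘P = 0` and `P∘d∘P = −P`. -/
def IsSpecial (P : A →ₗ[ℝ] A) : Prop :=
  (∀ x : A, P (P x) = 0) ∧ ∀ x : A, P (X.d (P x)) = -(P x)

/-- The symmetry property `⟨Px,y⟩ = (−1)^{deg x} ⟨x,Py⟩` of a propagator. -/
def IsSymmetricDeg (P : A →ₗ[ℝ] A) : Prop :=
  ∀ i : ℤ, ∀ x ∈ X.grading i, ∀ y : A,
    X.pair (P x) y = (-1 : ℝ) ^ i * X.pair x (P y)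

/-- A propagator: a homotopy operator satisfying the symmetry property. -/
def IsPropagator (P : A →ₗ[ℝ] A) : Prop :=
  X.IsHomotopyOperator P ∧ X.IsSymmetricDeg P

/-- A symmetric operator: `⟨px,y⟩ = ⟨x,py⟩`. -/
def IsSymmetric (p : A →ₗ[ℝ] A) : Prop :=
  ∀ x y : A, X.pair (p x) y = X.pair x (p y)

/-- Nondegeneracy of the pairing. -/
def Nondegenerate : Prop :=
  ∀ x : A, (∀ y : A, X.pair x y = 0) → x = 0

/-- The pairing is perfect: the musical map `x ↦ ⟨x,·⟩` is an isomorphism onto the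
graded dual, i.e. it is injective and every linear functional on `A^{n-i}` is
represented by an element of `A^i`. -/
def Perfect : Prop :=
  X.Nondegenerate ∧
    ∀ i : ℤ, ∀ φ : ↥(X.grading (X.n - i)) →ₗ[ℝ] ℝ,
      ∃ x ∈ X.grading i, ∀ y : ↥(X.grading (X.n - i)), X.pair x (y : A) = φ y

/-- A chain map induces an isomorphism on cohomology (elementwise formulation). -/
def IsQuasiIso (f : A →ₗ[ℝ] A) : Prop :=
  (∀ x : A, X.d x = 0 → ∃ y : A, X.d y = 0 ∧ ∃ z : A, f y - x = X.d z) ∧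
  (∀ y : A, X.d y = 0 → (∃ z : A, f y = X.d z) → ∃ w : A, y = X.d w)

/-- A graded subspace: spanned by its homogeneous elements. -/
def IsGradedSubspace (B : Submodule ℝ A) : Prop :=
  ∀ x ∈ B, x ∈ ⨆ i : ℤ, B ⊓ X.grading i

/-- A subcomplex: a graded subspace preserved by the differential. -/
def IsSubcomplex (B : Submodule ℝ A) : Prop :=
  X.IsGradedSubspace B ∧ ∀ x ∈ B, X.d x ∈ B

/-- The inclusion `B ↪ A` is a quasi-isomorphism (elementwise formulation). -/
def InclQuasiIso (B : Submodule ℝ A) : Prop :=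
  (∀ x : A, X.d x = 0 → ∃ b ∈ B, X.d b = 0 ∧ ∃ z : A, x - b = X.d z) ∧
  (∀ b ∈ B, X.d b = 0 → (∃ z : A, b = X.d z) → ∃ c ∈ B, b = X.d c)

/-- The restriction of the pairing to `B` is perfect. -/
def SubPerfect (B : Submodule ℝ A) : Prop :=
  (∀ x ∈ B, (∀ y ∈ B, X.pair x y = 0) → x = 0) ∧
    ∀ i : ℤ, ∀ φ : ↥(B ⊓ X.grading (X.n - i)) →ₗ[ℝ] ℝ,
      ∃ x ∈ B ⊓ X.grading i, ∀ y : ↥(B ⊓ X.grading (X.n - i)), X.pair x (y : A) = φ y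

/-- The orthogonal complement `B^⊥ = {x | ⟨x,b⟩ = 0 ∀ b ∈ B}`. -/
def perp (B : Submodule ℝ A) : Submodule ℝ A where
  carrier := {x : A | ∀ b ∈ B, X.pair x b = 0}
  add_mem' := by
    intro x y hx hy
    intro b hb
    have hx' := hx b hb
    have hy' := hy b hb
    simp only [map_add, LinearMap.add_apply, hx', hy', add_zero]
  zero_mem' := by
    intro b hb
    simp
  smul_mem' := by
    intro c x hx b hb
    have hx' := hx b hb
    simp only [map_smul, LinearMap.smul_apply, hx', smul_zero]

/-- A harmonic subspace: a graded subspace `H` with `ker d = H ⊕ im d`. -/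
def IsHarmonic (H : Submodule ℝ A) : Prop :=
  X.IsGradedSubspace H ∧ H ≤ LinearMap.ker X.d ∧
    H ⊓ LinearMap.range X.d = ⊥ ∧ H ⊔ LinearMap.range X.d = LinearMap.ker X.d

/-- A Hodge decomposition `B = H ⊕ d(B) ⊕ C` of a subcomplex `B ⊆ A` (with respect to
the restricted pairing); taking `B = ⊤` gives a Hodge decomposition of `A`. -/
def IsHodgeOn (B H C : Submodule ℝ A) : Prop :=
  H ≤ B ∧ C ≤ B ∧ X.IsGradedSubspace H ∧ X.IsGradedSubspace C ∧
  H ≤ LinearMap.ker X.d ∧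
  H ⊓ Submodule.map X.d B = ⊥ ∧
  H ⊔ Submodule.map X.d B = LinearMap.ker X.d ⊓ B ∧
  C ⊓ LinearMap.ker X.d = ⊥ ∧
  C ⊔ (LinearMap.ker X.d ⊓ B) = B ∧
  (∀ c ∈ C, ∀ c' ∈ C, X.pair c c' = 0) ∧
  (∀ c ∈ C, ∀ h ∈ H, X.pair c h = 0)

/-- A Hodge decomposition `A = H ⊕ im d ⊕ C` of the full complex. -/
def IsHodge (H C : Submodule ℝ A) : Prop :=
  X.IsHodgeOn ⊤ H C

/-- `A` is of Hodge type if it admits a Hodge decomposition. -/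
def IsHodgeType : Prop :=
  ∃ H C : Submodule ℝ A, X.IsHodge H C

/-- The operator `P_{H,C}` canonically associated to a Hodge decomposition `(H,C)`:
`P(dy) = −y` for `y ∈ C`, and `P = 0` on `H ⊕ C`. -/
def IsHodgeOperator (H C : Submodule ℝ A) (P : A →ₗ[ℝ] A) : Prop :=
  (∀ y ∈ C, P (X.d y) = -y) ∧ (∀ x ∈ H, P x = 0) ∧ ∀ x ∈ C, P x = 0

/-- The degenerate subspace `A_deg = {a | ⟨a,x⟩ = 0 ∀ x}`. -/
def degSub : Submodule ℝ A := X.perp ⊤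

/-- The induced pairing on cohomology is nondegenerate (elementwise formulation). -/
def CohomNondeg : Prop :=
  ∀ x : A, X.d x = 0 → (∀ y : A, X.d y = 0 → X.pair x y = 0) → ∃ z : A, x = X.d z

/-- The induced pairing on cohomology is perfect (elementwise formulation). -/
def CohomPerfect : Prop :=
  X.CohomNondeg ∧
    ∀ i : ℤ, ∀ φ : ↥(LinearMap.ker X.d ⊓ X.grading (X.n - i)) →ₗ[ℝ] ℝ,
      (∀ y : ↥(LinearMap.ker X.d ⊓ X.grading (X.n - i)),
          (∃ z : A, (y : A) = X.d z) → φ y = 0) →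
      ∃ x ∈ LinearMap.ker X.d ⊓ X.grading i,
        ∀ y : ↥(LinearMap.ker X.d ⊓ X.grading (X.n - i)), X.pair x (y : A) = φ y

end PairedComplex

namespace PairedComplex

variable {A : Type*} [AddCommGroup A] [Module ℝ A] (X : PairedComplex A)

/-- A realization of the nondegenerate quotient `Q(A) = A / A_deg`:
a surjective chain map with kernel `A_deg` preserving pairings, gradings and degree. -/
def IsQuotientMap {B : Type*} [AddCommGroup B] [Module ℝ B]
    (Y : PairedComplex B) (q : A →ₗ[ℝ] B) : Prop :=
  Function.Surjective q ∧
  LinearMap.ker q = X.degSub ∧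
  (∀ x : A, q (X.d x) = Y.d (q x)) ∧
  (∀ x y : A, Y.pair (q x) (q y) = X.pair x y) ∧
  (∀ i : ℤ, ∀ x ∈ X.grading i, q x ∈ Y.grading i) ∧
  Y.n = X.n

/-- A Hodge star on a nonnegatively graded cochain complex with pairing of degree `n`:
a degree-reversing involution (up to sign) such that `(x,y) := ⟨x,⋆y⟩` is a positive
definite inner product. -/
def IsHodgeStar (star : A →ₗ[ℝ] A) : Prop :=
  (∀ i : ℤ, ∀ x ∈ X.grading i, star x ∈ X.grading (X.n - i)) ∧
  (∀ i : ℤ, ∀ x ∈ X.grading i, star (star x) = ((-1 : ℝ) ^ (i * (X.n - i))) • x) ∧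
  (∀ x y : A, X.pair x (star y) = X.pair y (star x)) ∧
  (∀ x : A, x ≠ 0 → 0 < X.pair x (star x))

end PairedComplex

/-- A differential graded algebra with pairing: a `PairedComplex` together with an
associative product of degree `0` satisfying the Leibniz rule and compatible with the
pairing. -/
structure PairedDGA (A : Type*) [AddCommGroup A] [Module ℝ A] extends
    PairedComplex A where
  /-- the product -/
  mul : A →ₗ[ℝ] A →ₗ[ℝ] A
  mul_degree : ∀ i j : ℤ, ∀ x ∈ grading i, ∀ y ∈ grading j, mul x y ∈ grading (i + j)
  mul_assoc' : ∀ x y z : A, mul (mul x y) z = mul x (mul y z)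
  leibniz : ∀ i : ℤ, ∀ x ∈ grading i, ∀ y : A,
      d (mul x y) = mul (d x) y + ((-1 : ℝ) ^ i) • mul x (d y)
  pair_mul : ∀ x y z : A, pair (mul x y) z = pair x (mul y z)

namespace PairedDGA

variable {A : Type*} [AddCommGroup A] [Module ℝ A] (Y : PairedDGA A)

/-- `one` is a unit for the product. -/
def IsUnit (one : A) : Prop :=
  one ≠ 0 ∧ one ∈ Y.grading 0 ∧ ∀ x : A, Y.mul one x = x ∧ Y.mul x one = x

/-- graded commutativity. -/
def IsCommutative : Prop :=
  ∀ i j : ℤ, ∀ x ∈ Y.grading i, ∀ y ∈ Y.grading j,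
    Y.mul x y = ((-1 : ℝ) ^ (i * j)) • Y.mul y x

/-- An orientation of degree `n` inducing the pairing: a chain-level functional
supported in degree `n`, vanishing on boundaries, nontrivial on cohomology,
with `⟨x,y⟩ = o(x∧y)`. -/
def IsOrientation (o : A →ₗ[ℝ] ℝ) : Prop :=
  (∀ i : ℤ, i ≠ Y.n → ∀ x ∈ Y.grading i, o x = 0) ∧
  (∀ x : A, o (Y.d x) = 0) ∧
  (∃ x : A, Y.d x = 0 ∧ o x ≠ 0) ∧
  (∀ x y : A, Y.pair x y = o (Y.mul x y))

/-- The small subalgebra `S_P`: the smallest graded dg-subalgebra containing the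
harmonic subspace `H_P = im π_P` and preserved by `P`. -/
def smallSub (P : A →ₗ[ℝ] A) : Submodule ℝ A :=
  sInf {S : Submodule ℝ A |
    LinearMap.range (Y.toPairedComplex.assocProj P) ≤ S ∧
    Y.toPairedComplex.IsGradedSubspace S ∧
    (∀ x ∈ S, Y.d x ∈ S) ∧
    (∀ x ∈ S, ∀ y ∈ S, Y.mul x y ∈ S) ∧
    (∀ x ∈ S, P x ∈ S)}

end PairedDGA

/-- Elements of `A` obtained from homogeneous elements of the harmonic subspace
`H_P = im π_P` by iterated applications of `P` and of the product. -/
inductive TreeGen {A : Type*} [AddCommGroup A] [Module ℝ A]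
    (Y : PairedDGA A) (P : A →ₗ[ℝ] A) : A → Prop
  | base : ∀ (i : ℤ) (x : A), x ∈ Y.grading i →
      x ∈ LinearMap.range (Y.toPairedComplex.assocProj P) → TreeGen Y P x
  | mul : ∀ x y : A, TreeGen Y P x → TreeGen Y P y → TreeGen Y P (Y.mul x y)
  | app : ∀ x : A, TreeGen Y P x → TreeGen Y P (P x)


section HodgeAux

open DirectSum

variable {A : Type*} [AddCommGroup A] [Module ℝ A] (X : PairedComplex A)

/-- the equivalence coming from internality of the grading -/
noncomputable def gE : (⨁ i : ℤ, ↥(X.grading i)) ≃ₗ[ℝ] A :=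
  LinearEquiv.ofBijective (DirectSum.coeLinearMap X.grading) X.internal

/-- projection onto the degree `i` component -/
noncomputable def proj (i : ℤ) : A →ₗ[ℝ] A :=
  (X.grading i).subtype ∘ₗ (DFinsupp.lapply i) ∘ₗ
    ((gE X).symm : A →ₗ[ℝ] ⨁ i : ℤ, ↥(X.grading i))

lemma proj_apply (i : ℤ) (x : A) : proj X i x = ((gE X).symm x i : A) := rfl

lemma proj_mem (i : ℤ) (x : A) : proj X i x ∈ X.grading i := ((gE X).symm x i).2

lemma proj_of_mem {i : ℤ} {x : A} (h : x ∈ X.grading i) : proj X i x = x := by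
  rw [proj_apply, gE, DirectSum.IsInternal.ofBijective_coeLinearMap_of_mem X.internal h]

lemma proj_of_mem_ne {i j : ℤ} {x : A} (hij : i ≠ j) (h : x ∈ X.grading i) :
    proj X j x = 0 := by
  rw [proj_apply, gE, DirectSum.IsInternal.ofBijective_coeLinearMap_of_mem_ne X.internal hij h]
  rfl

lemma sum_proj (x : A) :
    ∃ s : Finset ℤ, (∀ i ∉ s, proj X i x = 0) ∧ ∑ i ∈ s, proj X i x = x := by
  classical
  refine ⟨((gE X).symm x).support, ?_, ?_⟩
  · intro i hi
    rw [proj_apply]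
    rw [DFinsupp.notMem_support_iff] at hi
    simp [hi]
  · have key : ∀ (y : ⨁ i : ℤ, ↥(X.grading i)), gE X y = ∑ i ∈ y.support, ((y i : A)) := by
      intro y
      conv_lhs => rw [← DirectSum.sum_support_of y]
      show DirectSum.coeLinearMap X.grading _ = _
      rw [map_sum]
      exact Finset.sum_congr rfl fun i _ => DirectSum.coeLinearMap_of _ _ _
    have h2 : x = ∑ i ∈ ((gE X).symm x).support, (((gE X).symm x i : A)) := by
      conv_lhs => rw [← LinearEquiv.apply_symm_apply (gE X) x]
      exact key _
    exact h2.symm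

lemma mem_of_proj {S : Submodule ℝ A} {x : A} (h : ∀ i, proj X i x ∈ S) : x ∈ S := by
  obtain ⟨s, -, hs⟩ := sum_proj X x
  rw [← hs]
  exact Submodule.sum_mem _ fun i _ => h i

lemma d_proj (i : ℤ) (x : A) : proj X (i + 1) (X.d x) = X.d (proj X i x) := by
  obtain ⟨s, hs0, hs⟩ := sum_proj X x
  have hdx : X.d x = ∑ j ∈ s, X.d (proj X j x) := by rw [← map_sum, hs]
  rw [hdx, map_sum, Finset.sum_eq_single i
    (fun j _ hj => proj_of_mem_ne X (show j + 1 ≠ i + 1 by omega)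
      (X.d_degree j _ (proj_mem X j x)))
    (fun hi => by rw [hs0 i hi, map_zero, map_zero])]
  exact proj_of_mem X (X.d_degree i _ (proj_mem X i x))

lemma d_proj_eq_zero {x : A} (hx : X.d x = 0) (i : ℤ) : X.d (proj X i x) = 0 := by
  rw [← d_proj, hx, map_zero]

lemma d_proj' (i : ℤ) (x : A) : X.d (proj X i x) = proj X (i + 1) (X.d x) :=
  (d_proj X i x).symm

lemma proj_mem_of_graded {S : Submodule ℝ A} (hS : X.IsGradedSubspace S) {x : A}
    (hx : x ∈ S) (i : ℤ) : proj X i x ∈ S := by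
  refine Submodule.iSup_induction (motive := fun y => ∀ i, proj X i y ∈ S) _ (hS x hx) ?_ ?_ ?_ i
  · rintro j y ⟨hyS, hyg⟩ k
    rcases eq_or_ne j k with rfl | hne
    · rw [proj_of_mem X hyg]; exact hyS
    · rw [proj_of_mem_ne X hne hyg]; exact zero_mem _
  · intro k; rw [map_zero]; exact zero_mem _
  · intro y z hy hz k; rw [map_add]; exact add_mem (hy k) (hz k)

lemma isGraded_of_proj {S : Submodule ℝ A} (h : ∀ x ∈ S, ∀ i, proj X i x ∈ S) :
    X.IsGradedSubspace S := by
  intro x hx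
  obtain ⟨s, -, hs⟩ := sum_proj X x
  rw [← hs]
  refine Submodule.sum_mem _ fun i _ => ?_
  exact Submodule.mem_iSup_of_mem i ⟨h x hx i, proj_mem X i x⟩

end HodgeAux
section HodgeAux2

variable {A : Type*} [AddCommGroup A] [Module ℝ A] (X : PairedComplex A)

lemma pair_d_ker {y : A} (hy : X.d y = 0) (x : A) : X.pair (X.d x) y = 0 := by
  obtain ⟨s, -, hs⟩ := sum_proj X x
  have : X.pair (X.d x) y = ∑ j ∈ s, X.pair (X.d (proj X j x)) y := by
    calc X.pair (X.d x) y = (∑ j ∈ s, X.pair (X.d (proj X j x))) y := by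
          rw [← map_sum, ← map_sum, hs]
      _ = _ := by rw [LinearMap.coe_sum, Finset.sum_apply]
  rw [this]
  refine Finset.sum_eq_zero fun j _ => ?_
  rw [X.pair_d j _ (proj_mem X j x), hy, map_zero, mul_zero]

lemma pair_ker_d {x : A} (hx : X.d x = 0) (y : A) : X.pair x (X.d y) = 0 := by
  obtain ⟨s, -, hs⟩ := sum_proj X x
  obtain ⟨t, -, ht⟩ := sum_proj X y
  have h1 : X.pair x (X.d y) = ∑ i ∈ s, ∑ j ∈ t, X.pair (proj X i x) (X.d (proj X j y)) := by
    calc X.pair x (X.d y) = (∑ i ∈ s, X.pair (proj X i x)) (X.d y) := by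
          rw [← map_sum, hs]
      _ = ∑ i ∈ s, X.pair (proj X i x) (X.d y) := by
          rw [LinearMap.coe_sum, Finset.sum_apply]
      _ = _ := Finset.sum_congr rfl fun i _ => by
          rw [show X.d y = ∑ j ∈ t, X.d (proj X j y) by rw [← map_sum, ht], map_sum]
  rw [h1]
  refine Finset.sum_eq_zero fun i _ => Finset.sum_eq_zero fun j _ => ?_
  rw [X.pair_symm i (j + 1) _ (proj_mem X i x) _ (X.d_degree j _ (proj_mem X j y)),
    X.pair_d j _ (proj_mem X j y), d_proj_eq_zero X hx]
  simp

lemma pair_proj_left (i : ℤ) (x y : A) :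
    X.pair (proj X i x) y = X.pair x (proj X (X.n - i) y) := by
  obtain ⟨s, hs0, hs⟩ := sum_proj X x
  obtain ⟨t, ht0, ht⟩ := sum_proj X y
  have h1 : X.pair (proj X i x) y = ∑ j ∈ t, X.pair (proj X i x) (proj X j y) := by
    rw [← map_sum, ht]
  have h2 : X.pair x (proj X (X.n - i) y) = ∑ k ∈ s, X.pair (proj X k x) (proj X (X.n - i) y) := by
    calc X.pair x (proj X (X.n - i) y)
        = (∑ k ∈ s, X.pair (proj X k x)) (proj X (X.n - i) y) := by rw [← map_sum, hs]
      _ = _ := by rw [LinearMap.coe_sum, Finset.sum_apply]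
  rw [h1, h2, Finset.sum_eq_single (X.n - i)
    (fun j _ hj => X.pair_degree i j (by omega) _ (proj_mem X i x) _ (proj_mem X j y))
    (fun h => by rw [ht0 _ h, map_zero]),
    Finset.sum_eq_single i
    (fun k _ hk => X.pair_degree k (X.n - i) (by omega) _ (proj_mem X k x) _
      (proj_mem X (X.n - i) y))
    (fun h => by rw [hs0 _ h, map_zero, LinearMap.zero_apply])]

lemma pair_proj_right (j : ℤ) (x y : A) :
    X.pair x (proj X j y) = X.pair (proj X (X.n - j) x) y := by
  rw [pair_proj_left X (X.n - j) x y]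
  have : X.n - (X.n - j) = j := by omega
  rw [this]

lemma pair_ext_on {S T : Submodule ℝ A} (hS : X.IsGradedSubspace S)
    (hT : X.IsGradedSubspace T) (f g : A →ₗ[ℝ] A →ₗ[ℝ] ℝ)
    (h : ∀ i j : ℤ, ∀ x ∈ S, x ∈ X.grading i → ∀ y ∈ T, y ∈ X.grading j → f x y = g x y) :
    ∀ x ∈ S, ∀ y ∈ T, f x y = g x y := by
  intro x hx y hy
  obtain ⟨s, -, hs⟩ := sum_proj X x
  obtain ⟨t, -, ht⟩ := sum_proj X y
  have expand : ∀ F : A →ₗ[ℝ] A →ₗ[ℝ] ℝ,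
      F x y = ∑ i ∈ s, ∑ j ∈ t, F (proj X i x) (proj X j y) := by
    intro F
    calc F x y = (∑ i ∈ s, F (proj X i x)) y := by rw [← map_sum, hs]
      _ = ∑ i ∈ s, F (proj X i x) y := by rw [LinearMap.coe_sum, Finset.sum_apply]
      _ = _ := Finset.sum_congr rfl fun i _ => by rw [← map_sum, ht]
  rw [expand f, expand g]
  refine Finset.sum_congr rfl fun i _ => Finset.sum_congr rfl fun j _ => ?_
  exact h i j _ (proj_mem_of_graded X hS hx i) (proj_mem X i x)
    _ (proj_mem_of_graded X hT hy j) (proj_mem X j y)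

lemma neg_one_zpow_mul_self (k : ℤ) : ((-1 : ℝ) ^ k) * ((-1 : ℝ) ^ k) = 1 := by
  rw [← zpow_add₀ (by norm_num : (-1 : ℝ) ≠ 0)]
  have : k + k = 2 * k := by ring
  rw [this, zpow_mul]
  norm_num

lemma pair_flip_zero {S T : Submodule ℝ A} (hS : X.IsGradedSubspace S)
    (hT : X.IsGradedSubspace T) (h : ∀ s ∈ S, ∀ t ∈ T, X.pair s t = 0) :
    ∀ t ∈ T, ∀ s ∈ S, X.pair t s = 0 := by
  have := pair_ext_on X hT hS X.pair 0 ?_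
  · intro t ht s hs
    have h2 := this t ht s hs
    simpa using h2
  · intro i j t htT hti s hsS hsj
    rw [X.pair_symm i j t hti s hsj, h s hsS t htT]
    simp

end HodgeAux2
section HodgeAux3

variable {A : Type*} [AddCommGroup A] [Module ℝ A] (X : PairedComplex A)

lemma mem_perp {S : Submodule ℝ A} {x : A} :
    x ∈ X.perp S ↔ ∀ b ∈ S, X.pair x b = 0 := Iff.rfl

lemma proj_mem_perp {S : Submodule ℝ A} (hS : X.IsGradedSubspace S) {x : A}
    (hx : x ∈ X.perp S) (i : ℤ) : proj X i x ∈ X.perp S := by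
  intro b hb
  rw [pair_proj_left]
  exact hx _ (proj_mem_of_graded X hS hb _)

lemma perp_graded {S : Submodule ℝ A} (hS : X.IsGradedSubspace S) :
    X.IsGradedSubspace (X.perp S) :=
  isGraded_of_proj X fun x hx i => proj_mem_perp X hS hx i

lemma pair_perp_flip {S : Submodule ℝ A} (hS : X.IsGradedSubspace S)
    {b v : A} (hb : b ∈ S) (hv : v ∈ X.perp S) : X.pair b v = 0 :=
  pair_flip_zero X (perp_graded X hS) hS (fun s hs t ht => hs t ht) b hb v hv

lemma d_mem_perp {S : Submodule ℝ A} (hSg : X.IsGradedSubspace S)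
    (hSd : ∀ b ∈ S, X.d b ∈ S) {x : A} (hx : x ∈ X.perp S) : X.d x ∈ X.perp S := by
  intro b hb
  obtain ⟨s, -, hs⟩ := sum_proj X x
  have : X.pair (X.d x) b = ∑ j ∈ s, X.pair (X.d (proj X j x)) b := by
    calc X.pair (X.d x) b = (∑ j ∈ s, X.pair (X.d (proj X j x))) b := by
          rw [← map_sum, ← map_sum, hs]
      _ = _ := by rw [LinearMap.coe_sum, Finset.sum_apply]
  rw [this]
  refine Finset.sum_eq_zero fun j _ => ?_
  rw [X.pair_d j _ (proj_mem X j x),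
    proj_mem_perp X hSg hx j _ (hSd b hb), mul_zero]

lemma exists_compl_le {p V : Submodule ℝ A} (h : p ≤ V) :
    ∃ q, q ≤ V ∧ p ⊓ q = ⊥ ∧ p ⊔ q = V := by
  obtain ⟨q', hq'⟩ := Submodule.exists_isCompl (p.comap V.subtype)
  refine ⟨q'.map V.subtype, ?_, ?_, ?_⟩
  · exact Submodule.map_subtype_le V q'
  · rw [eq_bot_iff]
    rintro x ⟨hxp, hxq⟩
    obtain ⟨y, hy, rfl⟩ := hxq
    have hy0 : y ∈ p.comap V.subtype ⊓ q' := ⟨hxp, hy⟩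
    rw [hq'.inf_eq_bot, Submodule.mem_bot] at hy0
    rw [hy0]
    simp
  · apply le_antisymm
    · exact sup_le h (Submodule.map_subtype_le V q')
    · intro v hv
      have : (⟨v, hv⟩ : ↥V) ∈ p.comap V.subtype ⊔ q' := by rw [hq'.sup_eq_top]; trivial
      obtain ⟨a, ha, b, hb, hab⟩ := Submodule.mem_sup.mp this
      have hv2 : v = (a : A) + (b : A) := by
        have h3 := congrArg (Subtype.val) hab
        simpa using h3.symm
      rw [hv2]
      exact Submodule.add_mem_sup ha (Submodule.mem_map_of_mem hb)

lemma glue {p q V : Submodule ℝ A} (hpV : p ≤ V) (hqV : q ≤ V)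
    (hd : p ⊓ q = ⊥) (hs : p ⊔ q = V) (f : ↥p →ₗ[ℝ] ℝ) :
    ∃ φ : ↥V →ₗ[ℝ] ℝ, (∀ (x : A) (hx : x ∈ p), φ ⟨x, hpV hx⟩ = f ⟨x, hx⟩) ∧
      ∀ (x : A) (hx : x ∈ q), φ ⟨x, hqV hx⟩ = 0 := by
  have hc : IsCompl (p.comap V.subtype) (q.comap V.subtype) := by
    constructor
    · rw [Submodule.disjoint_def]
      intro v hv1 hv2
      have : (v : A) ∈ p ⊓ q := ⟨hv1, hv2⟩
      rw [hd] at this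
      exact Subtype.ext (by simpa using this)
    · rw [codisjoint_iff, eq_top_iff]
      rintro ⟨v, hv⟩ -
      have hv' : v ∈ p ⊔ q := hs.symm ▸ hv
      obtain ⟨a, ha, b, hb, hab⟩ := Submodule.mem_sup.mp hv'
      refine Submodule.mem_sup.mpr ⟨⟨a, hpV ha⟩, ha, ⟨b, hqV hb⟩, hb, ?_⟩
      exact Subtype.ext hab
  refine ⟨f ∘ₗ (Submodule.comapSubtypeEquivOfLe hpV : _ ≃ₗ[ℝ] ↥p).toLinearMap ∘ₗ
    Submodule.linearProjOfIsCompl _ _ hc, ?_, ?_⟩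
  · intro x hx
    have h1 : Submodule.linearProjOfIsCompl _ _ hc ⟨x, hpV hx⟩
        = ⟨⟨x, hpV hx⟩, hx⟩ := by
      exact Submodule.linearProjOfIsCompl_apply_left hc ⟨⟨x, hpV hx⟩, hx⟩
    simp only [LinearMap.comp_apply, h1]
    congr 1
  · intro x hx
    have h1 : Submodule.linearProjOfIsCompl _ _ hc ⟨x, hqV hx⟩ = 0 :=
      (Submodule.projectionOnto_apply_eq_zero_iff hc (x := ⟨x, hqV hx⟩)).2 hx
    simp [LinearMap.comp_apply, h1]

/-- the graded submodule assembled from homogeneous pieces -/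
def projSub (M : ℤ → Submodule ℝ A) : Submodule ℝ A where
  carrier := {x | ∀ i, proj X i x ∈ M i}
  add_mem' := fun hx hy i => by rw [map_add]; exact add_mem (hx i) (hy i)
  zero_mem' := fun i => by rw [map_zero]; exact zero_mem _
  smul_mem' := fun c x hx i => by rw [map_smul]; exact Submodule.smul_mem _ c (hx i)

lemma mem_projSub {M : ℤ → Submodule ℝ A} {x : A} :
    x ∈ projSub X M ↔ ∀ i, proj X i x ∈ M i := Iff.rfl

lemma projSub_le {M : ℤ → Submodule ℝ A} {N : Submodule ℝ A}
    (h : ∀ i, M i ≤ N) : projSub X M ≤ N :=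
  fun _ hx => mem_of_proj X fun i => h i (hx i)

lemma mem_projSub_of_mem {M : ℤ → Submodule ℝ A} (hM : ∀ i, M i ≤ X.grading i)
    {x : A} {i : ℤ} (hx : x ∈ M i) : x ∈ projSub X M := by
  intro j
  rcases eq_or_ne i j with rfl | hne
  · rw [proj_of_mem X (hM i hx)]; exact hx
  · rw [proj_of_mem_ne X hne (hM i hx)]; exact zero_mem _

lemma projSub_graded (M : ℤ → Submodule ℝ A) (hM : ∀ i, M i ≤ X.grading i) :
    X.IsGradedSubspace (projSub X M) := by
  refine isGraded_of_proj X fun x hx i => ?_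
  exact mem_projSub_of_mem X hM (hx i)

lemma proj_mem_projSub {M : ℤ → Submodule ℝ A} (hM : ∀ i, M i ≤ X.grading i)
    {x : A} (hx : x ∈ projSub X M) (i : ℤ) : proj X i x ∈ projSub X M :=
  mem_projSub_of_mem X hM (hx i)

end HodgeAux3
section HodgeAux4

variable {A : Type*} [AddCommGroup A] [Module ℝ A] (X : PairedComplex A)

lemma pair_homog_left {i : ℤ} {z : A} (hz : z ∈ X.grading i) (c : A) :
    X.pair z c = X.pair z (proj X (X.n - i) c) := by
  conv_lhs => rw [← proj_of_mem X hz]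
  rw [pair_proj_left]

lemma pair_expand_right (x b : A) :
    (∀ i, X.pair x (proj X i b) = 0) → X.pair x b = 0 := by
  intro h
  obtain ⟨s, -, hs⟩ := sum_proj X b
  have : X.pair x b = ∑ i ∈ s, X.pair x (proj X i b) := by rw [← map_sum, hs]
  rw [this]
  exact Finset.sum_eq_zero fun i _ => h i

variable (Bsub : Submodule ℝ A)

lemma B_inf_perp (hBperf : X.SubPerfect Bsub) : Bsub ⊓ X.perp Bsub = ⊥ := by
  rw [eq_bot_iff]
  rintro x ⟨hxB, hxP⟩
  rw [Submodule.mem_bot]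
  exact hBperf.1 x hxB fun y hy => hxP y hy

lemma B_sup_perp (hB : X.IsSubcomplex Bsub) (hBperf : X.SubPerfect Bsub) :
    Bsub ⊔ X.perp Bsub = ⊤ := by
  rw [eq_top_iff]
  intro a _
  refine mem_of_proj X fun i => ?_
  set ai := proj X i a with hai
  have haig : ai ∈ X.grading i := proj_mem X i a
  obtain ⟨b, hb, hbp⟩ := hBperf.2 i ((X.pair ai) ∘ₗ (Bsub ⊓ X.grading (X.n - i)).subtype)
  have hperp : ai - b ∈ X.perp Bsub := by
    intro c hc
    have hbg : b ∈ X.grading i := hb.2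
    have : ai - b ∈ X.grading i := sub_mem haig hbg
    rw [pair_homog_left X this]
    have hm : proj X (X.n - i) c ∈ Bsub ⊓ X.grading (X.n - i) :=
      ⟨proj_mem_of_graded X hB.1 hc _, proj_mem X _ c⟩
    have := hbp ⟨proj X (X.n - i) c, hm⟩
    simp only [LinearMap.comp_apply, Submodule.coe_subtype] at this
    rw [map_sub, LinearMap.sub_apply, this]
    ring
  have : ai = b + (ai - b) := by abel
  rw [this]
  exact Submodule.add_mem_sup hb.1 hperp

lemma kerB_proj (hB : X.IsSubcomplex Bsub) {x : A}
    (hx : x ∈ LinearMap.ker X.d ⊓ Bsub) (i : ℤ) :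
    proj X i x ∈ LinearMap.ker X.d ⊓ Bsub := by
  refine Submodule.mem_inf.mpr ⟨?_, proj_mem_of_graded X hB.1 hx.2 i⟩
  exact LinearMap.mem_ker.mpr (d_proj_eq_zero X (LinearMap.mem_ker.mp (Submodule.mem_inf.mp hx).1) i)

lemma dB_proj {S : Submodule ℝ A} (hS : X.IsGradedSubspace S) {x : A}
    (hx : x ∈ Submodule.map X.d S) (i : ℤ) :
    proj X i x ∈ Submodule.map X.d S := by
  obtain ⟨w, hw, rfl⟩ := hx
  have : proj X i (X.d w) = X.d (proj X (i - 1) w) := by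
    have h := d_proj X (i - 1) w
    rw [show i - 1 + 1 = i by omega] at h
    exact h
  rw [this]
  exact ⟨proj X (i - 1) w, proj_mem_of_graded X hS hw _, rfl⟩

lemma dB_le_kerB {S : Submodule ℝ A} (hS : ∀ b ∈ S, X.d b ∈ S) :
    Submodule.map X.d S ≤ LinearMap.ker X.d ⊓ S := by
  rintro x ⟨w, hw, rfl⟩
  exact ⟨LinearMap.mem_ker.2 (X.d_sq w), hS w hw⟩

lemma kerBp_eq (hB : X.IsSubcomplex Bsub) (hqi : X.InclQuasiIso Bsub)
    (hBperf : X.SubPerfect Bsub) :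
    LinearMap.ker X.d ⊓ X.perp Bsub = Submodule.map X.d (X.perp Bsub) := by
  apply le_antisymm
  · rintro x ⟨hk, hp⟩
    obtain ⟨b, hbB, hdb, z, hz⟩ := hqi.1 x (LinearMap.mem_ker.1 hk)
    have hz' : z ∈ Bsub ⊔ X.perp Bsub := by
      rw [B_sup_perp X Bsub hB hBperf]; trivial
    obtain ⟨zb, hzb, zp, hzp, rfl⟩ := Submodule.mem_sup.mp hz'
    have key : x - X.d zp = b + X.d zb := by
      have h4 : x - b = X.d zb + X.d zp := by rw [← map_add]; exact hz
      have h5 : x = b + (X.d zb + X.d zp) := by rw [← h4]; abel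
      rw [h5]; abel
    have h1 : x - X.d zp ∈ X.perp Bsub :=
      sub_mem hp (d_mem_perp X hB.1 hB.2 hzp)
    have h2 : x - X.d zp ∈ Bsub := by
      rw [key]; exact add_mem hbB (hB.2 zb hzb)
    have h0 : x - X.d zp ∈ Bsub ⊓ X.perp Bsub := ⟨h2, h1⟩
    rw [B_inf_perp X Bsub hBperf, Submodule.mem_bot, sub_eq_zero] at h0
    exact ⟨zp, hzp, h0.symm⟩
  · rintro x ⟨w, hw, rfl⟩
    exact ⟨LinearMap.mem_ker.2 (X.d_sq w), d_mem_perp X hB.1 hB.2 hw⟩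

lemma perp_nondeg (hperf : X.Perfect) (hB : X.IsSubcomplex Bsub)
    (hBperf : X.SubPerfect Bsub) {x : A} (hx : x ∈ X.perp Bsub)
    (h : ∀ y ∈ X.perp Bsub, X.pair x y = 0) : x = 0 := by
  refine hperf.1 x fun y => ?_
  have hy : y ∈ Bsub ⊔ X.perp Bsub := by rw [B_sup_perp X Bsub hB hBperf]; trivial
  obtain ⟨b, hb, v, hv, rfl⟩ := Submodule.mem_sup.mp hy
  rw [map_add, hx b hb, h v hv, add_zero]

lemma perp_repr (hperf : X.Perfect) (hB : X.IsSubcomplex Bsub)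
    (hBperf : X.SubPerfect Bsub) (i : ℤ)
    (φ : ↥(X.perp Bsub ⊓ X.grading (X.n - i)) →ₗ[ℝ] ℝ) :
    ∃ x ∈ X.perp Bsub ⊓ X.grading i,
      ∀ y : ↥(X.perp Bsub ⊓ X.grading (X.n - i)), X.pair x (y : A) = φ y := by
  have hpV : X.perp Bsub ⊓ X.grading (X.n - i) ≤ X.grading (X.n - i) := inf_le_right
  have hqV : Bsub ⊓ X.grading (X.n - i) ≤ X.grading (X.n - i) := inf_le_right
  have hd : (X.perp Bsub ⊓ X.grading (X.n - i)) ⊓ (Bsub ⊓ X.grading (X.n - i)) = ⊥ := by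
    rw [eq_bot_iff]
    rintro y ⟨⟨h1, -⟩, ⟨h2, -⟩⟩
    have : y ∈ Bsub ⊓ X.perp Bsub := ⟨h2, h1⟩
    rwa [B_inf_perp X Bsub hBperf] at this
  have hs : (X.perp Bsub ⊓ X.grading (X.n - i)) ⊔ (Bsub ⊓ X.grading (X.n - i))
      = X.grading (X.n - i) := by
    apply le_antisymm (sup_le inf_le_right inf_le_right)
    intro y hy
    have : y ∈ Bsub ⊔ X.perp Bsub := by rw [B_sup_perp X Bsub hB hBperf]; trivial
    obtain ⟨b, hb, v, hv, rfl⟩ := Submodule.mem_sup.mp this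
    have hbv : proj X (X.n - i) (b + v) = b + v := proj_of_mem X hy
    rw [map_add] at hbv
    rw [← hbv]
    refine add_mem (Submodule.mem_sup_right ?_) (Submodule.mem_sup_left ?_)
    · exact ⟨proj_mem_of_graded X hB.1 hb _, proj_mem X _ b⟩
    · exact ⟨proj_mem_perp X hB.1 hv _, proj_mem X _ v⟩
  obtain ⟨ψ, hψ1, hψ2⟩ := glue hpV hqV hd hs φ
  obtain ⟨x, hx, hrep⟩ := hperf.2 i ψ
  have hxperp : x ∈ X.perp Bsub := by
    intro c hc
    have hx2 : x ∈ X.grading i := hx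
    rw [pair_homog_left X hx2]
    have hmem : proj X (X.n - i) c ∈ Bsub ⊓ X.grading (X.n - i) :=
      ⟨proj_mem_of_graded X hB.1 hc _, proj_mem X _ c⟩
    have := hrep ⟨proj X (X.n - i) c, proj_mem X _ c⟩
    rw [this]
    exact hψ2 _ hmem
  refine ⟨x, ⟨hxperp, hx⟩, fun y => ?_⟩
  have h1 := hrep ⟨(y : A), hpV y.2⟩
  have h2 := hψ1 (y : A) y.2
  simp only at h1 h2 ⊢
  rw [h1, h2]

end HodgeAux4
section HodgeAux5

variable {A : Type*} [AddCommGroup A] [Module ℝ A] (X : PairedComplex A)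
variable (Bsub : Submodule ℝ A)

lemma exact_B (hB : X.IsSubcomplex Bsub) (hBperf : X.SubPerfect Bsub)
    {i : ℤ} {x : A} (hxB : x ∈ Bsub) (hxg : x ∈ X.grading i) (hdx : X.d x = 0)
    (hperpk : ∀ k ∈ LinearMap.ker X.d ⊓ Bsub, X.pair x k = 0) :
    x ∈ Submodule.map X.d Bsub := by
  classical
  have heq : X.n - i + 1 = X.n - (i - 1) := by omega
  have hK'W : (LinearMap.ker X.d ⊓ Bsub) ⊓ X.grading (X.n - i)
      ≤ Bsub ⊓ X.grading (X.n - i) := fun y hy => ⟨hy.1.2, hy.2⟩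
  obtain ⟨U, hUW, hKU_inf, hKU_sup⟩ := exists_compl_le hK'W
  have hpV : Submodule.map X.d Bsub ⊓ X.grading (X.n - (i - 1))
      ≤ Bsub ⊓ X.grading (X.n - (i - 1)) :=
    fun y hy => ⟨(dB_le_kerB X hB.2 hy.1).2, hy.2⟩
  -- d maps U into p
  have hdU : ∀ u : ↥U, X.d (u : A) ∈ Submodule.map X.d Bsub ⊓ X.grading (X.n - (i - 1)) := by
    intro u
    have huW := hUW u.2
    exact ⟨⟨(u : A), huW.1, rfl⟩, heq ▸ X.d_degree _ _ huW.2⟩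
  set e : ↥U →ₗ[ℝ] ↥(Submodule.map X.d Bsub ⊓ X.grading (X.n - (i - 1))) :=
    LinearMap.codRestrict _ (X.d ∘ₗ U.subtype) hdU with he
  have hebij : Function.Bijective e := by
    constructor
    · rw [injective_iff_map_eq_zero]
      intro u hu
      have hdu : X.d (u : A) = 0 := congrArg Subtype.val hu
      have huW := hUW u.2
      have : (u : A) ∈ ((LinearMap.ker X.d ⊓ Bsub) ⊓ X.grading (X.n - i)) ⊓ U :=
        ⟨⟨⟨LinearMap.mem_ker.2 hdu, huW.1⟩, huW.2⟩, u.2⟩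
      rw [hKU_inf, Submodule.mem_bot] at this
      exact Subtype.ext this
    · rintro ⟨y, hy⟩
      obtain ⟨w, hw, hwy⟩ := hy.1
      have hw' : proj X (X.n - i) w ∈ Bsub ⊓ X.grading (X.n - i) :=
        ⟨proj_mem_of_graded X hB.1 hw _, proj_mem X _ w⟩
      have hdw' : X.d (proj X (X.n - i) w) = y := by
        rw [d_proj' X (X.n - i) w, hwy]
        rw [show X.n - i + 1 = X.n - (i - 1) by omega]
        exact proj_of_mem X hy.2
      have : proj X (X.n - i) w
          ∈ ((LinearMap.ker X.d ⊓ Bsub) ⊓ X.grading (X.n - i)) ⊔ U := by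
        rw [hKU_sup]; exact hw'
      obtain ⟨k, hk, u, hu, hku⟩ := Submodule.mem_sup.mp this
      refine ⟨⟨u, hu⟩, Subtype.ext ?_⟩
      have : X.d u = y := by
        have hdk : X.d k = 0 := LinearMap.mem_ker.1 hk.1.1
        have := congrArg X.d hku
        rw [map_add, hdk, zero_add, hdw'] at this
        exact this
      exact this
  set eE := LinearEquiv.ofBijective e hebij with heE
  set f : ↥(Submodule.map X.d Bsub ⊓ X.grading (X.n - (i - 1))) →ₗ[ℝ] ℝ :=
    (((-1 : ℝ) ^ i) • (X.pair x ∘ₗ U.subtype)) ∘ₗ (eE.symm : _ →ₗ[ℝ] ↥U) with hf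
  obtain ⟨q, hqV, hpq_inf, hpq_sup⟩ := exists_compl_le hpV
  obtain ⟨φ, hφ1, hφ2⟩ := glue hpV hqV hpq_inf hpq_sup f
  obtain ⟨w, hwB, hwrep⟩ := hBperf.2 (i - 1) φ
  -- key identity
  have key : ∀ v ∈ Bsub ⊓ X.grading (X.n - i), X.pair (X.d w) v = X.pair x v := by
    intro v hv
    have hdvp : X.d v ∈ Submodule.map X.d Bsub ⊓ X.grading (X.n - (i - 1)) :=
      ⟨⟨v, hv.1, rfl⟩, heq ▸ X.d_degree _ _ hv.2⟩
    have h1 : X.pair (X.d w) v = (-1 : ℝ) ^ (1 + (i - 1)) * X.pair w (X.d v) :=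
      X.pair_d (i - 1) w hwB.2 v
    have hsign : ((-1 : ℝ) ^ (1 + (i - 1))) = (-1 : ℝ) ^ i := by
      congr 1; omega
    have h2 : X.pair w (X.d v) = φ ⟨X.d v, hpV hdvp⟩ := hwrep ⟨X.d v, hpV hdvp⟩
    have h3 : φ ⟨X.d v, hpV hdvp⟩ = f ⟨X.d v, hdvp⟩ := hφ1 (X.d v) hdvp
    set u : ↥U := eE.symm ⟨X.d v, hdvp⟩ with hu
    have hdu : X.d (u : A) = X.d v := by
      have := eE.apply_symm_apply ⟨X.d v, hdvp⟩
      have := congrArg Subtype.val this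
      exact this
    have h4 : f ⟨X.d v, hdvp⟩ = ((-1 : ℝ) ^ i) * X.pair x (u : A) := by
      rw [hf]
      simp [LinearMap.comp_apply, hu]
    have h5 : X.pair x (u : A) = X.pair x v := by
      have hvu : v - (u : A) ∈ LinearMap.ker X.d ⊓ Bsub := by
        refine Submodule.mem_inf.mpr ⟨LinearMap.mem_ker.mpr ?_, sub_mem hv.1 ((hUW u.2).1)⟩
        rw [map_sub, hdu, sub_self]
      have := hperpk _ hvu
      rw [map_sub] at this
      have : X.pair x v - X.pair x (u : A) = 0 := this
      linarith
    rw [h1, hsign, h2, h3, h4, h5, ← mul_assoc, neg_one_zpow_mul_self, one_mul]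
  -- conclude
  have hdwB : X.d w ∈ Bsub := hB.2 w hwB.1
  have hdwg : X.d w ∈ X.grading i := by
    have := X.d_degree (i - 1) w hwB.2
    rwa [show i - 1 + 1 = i by omega] at this
  have hz : ∀ b ∈ Bsub, X.pair (X.d w - x) b = 0 := by
    intro b hb
    have hsub : X.d w - x ∈ X.grading i := sub_mem hdwg hxg
    rw [pair_homog_left X hsub]
    have hproj : proj X (X.n - i) b ∈ Bsub ⊓ X.grading (X.n - i) :=
      ⟨proj_mem_of_graded X hB.1 hb _, proj_mem X _ b⟩
    rw [map_sub, LinearMap.sub_apply, key _ hproj, sub_self]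
  have := hBperf.1 _ (sub_mem hdwB hxB) hz
  rw [sub_eq_zero] at this
  exact ⟨w, hwB.1, this⟩

end HodgeAux5
section HodgeAux6

variable {A : Type*} [AddCommGroup A] [Module ℝ A] (X : PairedComplex A)
variable (Bsub : Submodule ℝ A) {C0 : ℤ → Submodule ℝ A}

lemma pair_B_zero (hB : X.IsSubcomplex Bsub)
    (hC0g : ∀ i, C0 i ≤ X.grading i)
    (hC0sup : ∀ i, (LinearMap.ker X.d ⊓ Bsub ⊓ X.grading i) ⊔ C0 i = Bsub ⊓ X.grading i)
    {x : A} (hker : ∀ k ∈ LinearMap.ker X.d ⊓ Bsub, X.pair x k = 0)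
    (hC : ∀ c ∈ projSub X C0, X.pair x c = 0) :
    ∀ b ∈ Bsub, X.pair x b = 0 := by
  intro b hb
  refine pair_expand_right X x b fun i => ?_
  have hmem : proj X i b ∈ (LinearMap.ker X.d ⊓ Bsub ⊓ X.grading i) ⊔ C0 i := by
    rw [hC0sup i]
    exact ⟨proj_mem_of_graded X hB.1 hb i, proj_mem X i b⟩
  obtain ⟨k, hk, c, hc, hkc⟩ := Submodule.mem_sup.mp hmem
  rw [← hkc, map_add, hker k hk.1, hC c (mem_projSub_of_mem X hC0g hc), zero_add]

lemma dRep_unique (hB : X.IsSubcomplex Bsub) (hBperf : X.SubPerfect Bsub)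
    (hC0g : ∀ i, C0 i ≤ X.grading i)
    (hC0sup : ∀ i, (LinearMap.ker X.d ⊓ Bsub ⊓ X.grading i) ⊔ C0 i = Bsub ⊓ X.grading i)
    {g g' : A} (hg : g ∈ Submodule.map X.d Bsub) (hg' : g' ∈ Submodule.map X.d Bsub)
    (h : ∀ c ∈ projSub X C0, X.pair g c = X.pair g' c) : g = g' := by
  have hδ : ∀ b ∈ Bsub, X.pair (g - g') b = 0 := by
    refine pair_B_zero X Bsub hB hC0g hC0sup ?_ ?_
    · intro k hk
      obtain ⟨w, -, rfl⟩ := hg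
      obtain ⟨w', -, rfl⟩ := hg'
      rw [map_sub, LinearMap.sub_apply,
        pair_d_ker X (LinearMap.mem_ker.1 hk.1) w,
        pair_d_ker X (LinearMap.mem_ker.1 hk.1) w', sub_zero]
    · intro c hc
      rw [map_sub, LinearMap.sub_apply, h c hc, sub_self]
  have := hBperf.1 _ (sub_mem ((dB_le_kerB X hB.2 hg).2) ((dB_le_kerB X hB.2 hg').2)) hδ
  rwa [sub_eq_zero] at this

lemma dRep_exists_homog (hB : X.IsSubcomplex Bsub) (hBperf : X.SubPerfect Bsub)
    (hC0g : ∀ i, C0 i ≤ X.grading i) (hC0B : ∀ i, C0 i ≤ Bsub)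
    (hC0inf : ∀ i, (LinearMap.ker X.d ⊓ Bsub ⊓ X.grading i) ⊓ C0 i = ⊥)
    (hC0sup : ∀ i, (LinearMap.ker X.d ⊓ Bsub ⊓ X.grading i) ⊔ C0 i = Bsub ⊓ X.grading i)
    (t : ℝ) {i : ℤ} {z : A} (hz : z ∈ X.grading i) :
    ∃ g, g ∈ Submodule.map X.d Bsub ∧ g ∈ X.grading i ∧
      ∀ c ∈ projSub X C0, X.pair g c = t * X.pair z c := by
  have hpV : C0 (X.n - i) ≤ Bsub ⊓ X.grading (X.n - i) := le_inf (hC0B _) (hC0g _)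
  have hqV : (LinearMap.ker X.d ⊓ Bsub) ⊓ X.grading (X.n - i)
      ≤ Bsub ⊓ X.grading (X.n - i) := fun y hy => ⟨hy.1.2, hy.2⟩
  have hinf : C0 (X.n - i) ⊓ (LinearMap.ker X.d ⊓ Bsub ⊓ X.grading (X.n - i)) = ⊥ := by
    rw [inf_comm]; exact hC0inf _
  have hsup : C0 (X.n - i) ⊔ (LinearMap.ker X.d ⊓ Bsub ⊓ X.grading (X.n - i))
      = Bsub ⊓ X.grading (X.n - i) := by
    rw [sup_comm]; exact hC0sup _
  obtain ⟨φ, hφ1, hφ2⟩ := glue hpV hqV hinf hsup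
    (t • (X.pair z ∘ₗ (C0 (X.n - i)).subtype))
  obtain ⟨x, hx, hrep⟩ := hBperf.2 i φ
  have hqmem : ∀ (y : A), y ∈ LinearMap.ker X.d ⊓ Bsub →
      X.pair x (proj X (X.n - i) y) = 0 := by
    intro y hy
    have hm : proj X (X.n - i) y ∈ LinearMap.ker X.d ⊓ Bsub ⊓ X.grading (X.n - i) :=
      ⟨kerB_proj X Bsub hB hy _, proj_mem X _ y⟩
    rw [hrep ⟨_, hqV hm⟩]
    exact hφ2 _ hm
  have hdx : X.d x = 0 := by
    have hall : ∀ b ∈ Bsub, X.pair (X.d x) b = 0 := by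
      intro b hb
      rw [X.pair_d i x hx.2, pair_homog_left X hx.2]
      have hdb : X.d b ∈ LinearMap.ker X.d ⊓ Bsub :=
        ⟨LinearMap.mem_ker.2 (X.d_sq b), hB.2 b hb⟩
      rw [hqmem _ hdb, mul_zero]
    exact hBperf.1 _ (hB.2 x hx.1) hall
  have hker : ∀ k ∈ LinearMap.ker X.d ⊓ Bsub, X.pair x k = 0 := by
    intro k hk
    rw [pair_homog_left X hx.2]
    exact hqmem k hk
  have hxdB := exact_B X Bsub hB hBperf hx.1 hx.2 hdx hker
  refine ⟨x, hxdB, hx.2, fun c hc => ?_⟩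
  have hcmem : proj X (X.n - i) c ∈ C0 (X.n - i) := hc (X.n - i)
  rw [pair_homog_left X hx.2 c, hrep ⟨_, hpV hcmem⟩, hφ1 _ hcmem]
  have : (t • (X.pair z ∘ₗ (C0 (X.n - i)).subtype)) ⟨_, hcmem⟩
      = t * X.pair z (proj X (X.n - i) c) := by
    simp
  rw [this, ← pair_homog_left X hz c]

lemma dRep_exists (hB : X.IsSubcomplex Bsub) (hBperf : X.SubPerfect Bsub)
    (hC0g : ∀ i, C0 i ≤ X.grading i) (hC0B : ∀ i, C0 i ≤ Bsub)
    (hC0inf : ∀ i, (LinearMap.ker X.d ⊓ Bsub ⊓ X.grading i) ⊓ C0 i = ⊥)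
    (hC0sup : ∀ i, (LinearMap.ker X.d ⊓ Bsub ⊓ X.grading i) ⊔ C0 i = Bsub ⊓ X.grading i)
    (t : ℝ) (z : A) :
    ∃ g, g ∈ Submodule.map X.d Bsub ∧
      ∀ c ∈ projSub X C0, X.pair g c = t * X.pair z c := by
  obtain ⟨s, -, hs⟩ := sum_proj X z
  have hh := fun j => dRep_exists_homog X Bsub hB hBperf hC0g hC0B hC0inf hC0sup t
    (proj_mem X j z)
  choose gg h1 h2 h3 using hh
  refine ⟨∑ j ∈ s, gg j, Submodule.sum_mem _ fun j _ => h1 j, fun c hc => ?_⟩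
  have e1 : X.pair (∑ j ∈ s, gg j) c = ∑ j ∈ s, X.pair (gg j) c := by
    rw [map_sum, LinearMap.coe_sum, Finset.sum_apply]
  rw [e1]
  have e2 : ∀ j ∈ s, X.pair (gg j) c = t * X.pair (proj X j z) c :=
    fun j _ => h3 j c hc
  rw [Finset.sum_congr rfl e2, ← Finset.mul_sum]
  congr 1
  calc ∑ j ∈ s, X.pair (proj X j z) c = (∑ j ∈ s, X.pair (proj X j z)) c := by
        rw [LinearMap.coe_sum, Finset.sum_apply]
    _ = X.pair z c := by rw [← map_sum, hs]

end HodgeAux6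
section HodgeAux7

variable {A : Type*} [AddCommGroup A] [Module ℝ A] (X : PairedComplex A)
variable (Bsub : Submodule ℝ A) {C0p : ℤ → Submodule ℝ A}

lemma pair_all_zero (hperf : X.Perfect) (hB : X.IsSubcomplex Bsub)
    (hBperf : X.SubPerfect Bsub)
    (hC0psup : ∀ i, (LinearMap.ker X.d ⊓ X.perp Bsub ⊓ X.grading i) ⊔ C0p i
      = X.perp Bsub ⊓ X.grading i)
    (hC0pg : ∀ i, C0p i ≤ X.grading i)
    {x : A} (hxp : x ∈ X.perp Bsub)
    (hker : ∀ k ∈ LinearMap.ker X.d ⊓ X.perp Bsub, X.pair x k = 0)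
    (hC : ∀ c ∈ projSub X C0p, X.pair x c = 0) : x = 0 := by
  have hBpart : ∀ v ∈ X.perp Bsub, X.pair x v = 0 := by
    intro v hv
    refine pair_expand_right X x v fun i => ?_
    have hmem : proj X i v ∈ (LinearMap.ker X.d ⊓ X.perp Bsub ⊓ X.grading i) ⊔ C0p i := by
      rw [hC0psup i]
      exact ⟨proj_mem_perp X hB.1 hv i, proj_mem X i v⟩
    obtain ⟨k, hk, c, hc, hkc⟩ := Submodule.mem_sup.mp hmem
    rw [← hkc, map_add, hker k hk.1, hC c (mem_projSub_of_mem X hC0pg hc), zero_add]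
  exact perp_nondeg X Bsub hperf hB hBperf hxp hBpart

lemma pRep_unique (hperf : X.Perfect) (hB : X.IsSubcomplex Bsub)
    (hBperf : X.SubPerfect Bsub)
    (hC0psup : ∀ i, (LinearMap.ker X.d ⊓ X.perp Bsub ⊓ X.grading i) ⊔ C0p i
      = X.perp Bsub ⊓ X.grading i)
    (hC0pg : ∀ i, C0p i ≤ X.grading i)
    {g g' : A} (hg : g ∈ Submodule.map X.d (X.perp Bsub))
    (hg' : g' ∈ Submodule.map X.d (X.perp Bsub))
    (h : ∀ c ∈ projSub X C0p, X.pair g c = X.pair g' c) : g = g' := by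
  have hsub : g - g' ∈ X.perp Bsub := by
    have hd : ∀ y ∈ Submodule.map X.d (X.perp Bsub), y ∈ X.perp Bsub := by
      rintro y ⟨w, hw, rfl⟩
      exact d_mem_perp X hB.1 hB.2 hw
    exact sub_mem (hd g hg) (hd g' hg')
  have := pair_all_zero X Bsub hperf hB hBperf hC0psup hC0pg hsub ?_ ?_
  · rwa [sub_eq_zero] at this
  · intro k hk
    obtain ⟨w, -, rfl⟩ := hg
    obtain ⟨w', -, rfl⟩ := hg'
    rw [map_sub, LinearMap.sub_apply,
      pair_d_ker X (LinearMap.mem_ker.1 hk.1) w,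
      pair_d_ker X (LinearMap.mem_ker.1 hk.1) w', sub_zero]
  · intro c hc
    rw [map_sub, LinearMap.sub_apply, h c hc, sub_self]

lemma pRep_exists_homog (hperf : X.Perfect) (hB : X.IsSubcomplex Bsub)
    (hBperf : X.SubPerfect Bsub) (hqi : X.InclQuasiIso Bsub)
    (hC0pg : ∀ i, C0p i ≤ X.grading i) (hC0pB : ∀ i, C0p i ≤ X.perp Bsub)
    (hC0pinf : ∀ i, (LinearMap.ker X.d ⊓ X.perp Bsub ⊓ X.grading i) ⊓ C0p i = ⊥)
    (hC0psup : ∀ i, (LinearMap.ker X.d ⊓ X.perp Bsub ⊓ X.grading i) ⊔ C0p i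
      = X.perp Bsub ⊓ X.grading i)
    (t : ℝ) {i : ℤ} {z : A} (hz : z ∈ X.grading i) :
    ∃ g, g ∈ Submodule.map X.d (X.perp Bsub) ∧ g ∈ X.grading i ∧
      ∀ c ∈ projSub X C0p, X.pair g c = t * X.pair z c := by
  have hpV : C0p (X.n - i) ≤ X.perp Bsub ⊓ X.grading (X.n - i) :=
    le_inf (hC0pB _) (hC0pg _)
  have hqV : (LinearMap.ker X.d ⊓ X.perp Bsub) ⊓ X.grading (X.n - i)
      ≤ X.perp Bsub ⊓ X.grading (X.n - i) := fun y hy => ⟨hy.1.2, hy.2⟩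
  have hinf : C0p (X.n - i) ⊓ (LinearMap.ker X.d ⊓ X.perp Bsub ⊓ X.grading (X.n - i)) = ⊥ := by
    rw [inf_comm]; exact hC0pinf _
  have hsup : C0p (X.n - i) ⊔ (LinearMap.ker X.d ⊓ X.perp Bsub ⊓ X.grading (X.n - i))
      = X.perp Bsub ⊓ X.grading (X.n - i) := by
    rw [sup_comm]; exact hC0psup _
  obtain ⟨φ, hφ1, hφ2⟩ := glue hpV hqV hinf hsup
    (t • (X.pair z ∘ₗ (C0p (X.n - i)).subtype))
  obtain ⟨x, hx, hrep⟩ := perp_repr X Bsub hperf hB hBperf i φ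
  have hqmem : ∀ (y : A), y ∈ LinearMap.ker X.d ⊓ X.perp Bsub →
      X.pair x (proj X (X.n - i) y) = 0 := by
    intro y hy
    have hm : proj X (X.n - i) y
        ∈ LinearMap.ker X.d ⊓ X.perp Bsub ⊓ X.grading (X.n - i) :=
      ⟨⟨LinearMap.mem_ker.2 (d_proj_eq_zero X (LinearMap.mem_ker.1 hy.1) _),
        proj_mem_perp X hB.1 hy.2 _⟩, proj_mem X _ y⟩
    rw [hrep ⟨_, hqV hm⟩]
    exact hφ2 _ hm
  have hdx : X.d x = 0 := by
    have hdxp : X.d x ∈ X.perp Bsub := d_mem_perp X hB.1 hB.2 hx.1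
    refine hperf.1 _ fun y => ?_
    have hy : y ∈ Bsub ⊔ X.perp Bsub := by
      rw [B_sup_perp X Bsub hB hBperf]; trivial
    obtain ⟨b, hb, v, hv, rfl⟩ := Submodule.mem_sup.mp hy
    rw [map_add, hdxp b hb, zero_add]
    rw [X.pair_d i x hx.2, pair_homog_left X hx.2]
    have hdv : X.d v ∈ LinearMap.ker X.d ⊓ X.perp Bsub :=
      ⟨LinearMap.mem_ker.2 (X.d_sq v), d_mem_perp X hB.1 hB.2 hv⟩
    rw [hqmem _ hdv, mul_zero]
  have hxdBp : x ∈ Submodule.map X.d (X.perp Bsub) := by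
    rw [← kerBp_eq X Bsub hB hqi hBperf]
    exact ⟨LinearMap.mem_ker.2 hdx, hx.1⟩
  refine ⟨x, hxdBp, hx.2, fun c hc => ?_⟩
  have hcmem : proj X (X.n - i) c ∈ C0p (X.n - i) := hc (X.n - i)
  rw [pair_homog_left X hx.2 c, hrep ⟨_, hpV hcmem⟩, hφ1 _ hcmem]
  have : (t • (X.pair z ∘ₗ (C0p (X.n - i)).subtype)) ⟨_, hcmem⟩
      = t * X.pair z (proj X (X.n - i) c) := by
    simp
  rw [this, ← pair_homog_left X hz c]

lemma pRep_exists (hperf : X.Perfect) (hB : X.IsSubcomplex Bsub)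
    (hBperf : X.SubPerfect Bsub) (hqi : X.InclQuasiIso Bsub)
    (hC0pg : ∀ i, C0p i ≤ X.grading i) (hC0pB : ∀ i, C0p i ≤ X.perp Bsub)
    (hC0pinf : ∀ i, (LinearMap.ker X.d ⊓ X.perp Bsub ⊓ X.grading i) ⊓ C0p i = ⊥)
    (hC0psup : ∀ i, (LinearMap.ker X.d ⊓ X.perp Bsub ⊓ X.grading i) ⊔ C0p i
      = X.perp Bsub ⊓ X.grading i)
    (t : ℝ) (z : A) :
    ∃ g, g ∈ Submodule.map X.d (X.perp Bsub) ∧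
      ∀ c ∈ projSub X C0p, X.pair g c = t * X.pair z c := by
  obtain ⟨s, -, hs⟩ := sum_proj X z
  have hh := fun j => pRep_exists_homog X Bsub hperf hB hBperf hqi hC0pg hC0pB
    hC0pinf hC0psup t (proj_mem X j z)
  choose gg h1 h2 h3 using hh
  refine ⟨∑ j ∈ s, gg j, Submodule.sum_mem _ fun j _ => h1 j, fun c hc => ?_⟩
  have e1 : X.pair (∑ j ∈ s, gg j) c = ∑ j ∈ s, X.pair (gg j) c := by
    rw [map_sum, LinearMap.coe_sum, Finset.sum_apply]
  rw [e1, Finset.sum_congr rfl fun j _ => h3 j c hc, ← Finset.mul_sum]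
  congr 1
  calc ∑ j ∈ s, X.pair (proj X j z) c = (∑ j ∈ s, X.pair (proj X j z)) c := by
        rw [LinearMap.coe_sum, Finset.sum_apply]
    _ = X.pair z c := by rw [← map_sum, hs]

end HodgeAux7
section HodgeAux8

variable {A : Type*} [AddCommGroup A] [Module ℝ A] (X : PairedComplex A)

lemma buildGamma (D : Submodule ℝ A) (C0f : ℤ → Submodule ℝ A)
    (hC0g : ∀ i, C0f i ≤ X.grading i)
    (hDproj : ∀ x ∈ D, ∀ i, proj X i x ∈ D)
    (huniq : ∀ g g', g ∈ D → g' ∈ D →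
      (∀ c ∈ projSub X C0f, X.pair g c = X.pair g' c) → g = g')
    (t : ℝ)
    (hex : ∀ z : A, ∃ g, g ∈ D ∧ ∀ c ∈ projSub X C0f, X.pair g c = t * X.pair z c) :
    ∃ γ : A →ₗ[ℝ] A, (∀ z, γ z ∈ D) ∧
      (∀ z, ∀ c ∈ projSub X C0f, X.pair (γ z) c = t * X.pair z c) ∧
      (∀ i z, γ (proj X i z) = proj X i (γ z)) := by
  choose g hg1 hg2 using hex
  have hadd : ∀ z w, g (z + w) = g z + g w := by
    intro z w
    refine huniq _ _ (hg1 _) (add_mem (hg1 z) (hg1 w)) fun c hc => ?_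
    rw [hg2 _ c hc, map_add, LinearMap.add_apply]
    rw [show X.pair (g z + g w) c = X.pair (g z) c + X.pair (g w) c by
      rw [map_add, LinearMap.add_apply]]
    rw [hg2 _ c hc, hg2 _ c hc]
    ring
  have hsmul : ∀ (r : ℝ) z, g (r • z) = r • g z := by
    intro r z
    refine huniq _ _ (hg1 _) (Submodule.smul_mem _ r (hg1 z)) fun c hc => ?_
    rw [hg2 _ c hc, map_smul, LinearMap.smul_apply,
      show X.pair (r • g z) c = r • (X.pair (g z) c) by rw [map_smul, LinearMap.smul_apply],
      hg2 _ c hc]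
    simp only [smul_eq_mul]
    ring
  set γ : A →ₗ[ℝ] A := { toFun := g, map_add' := hadd, map_smul' := hsmul } with hγ
  refine ⟨γ, fun z => hg1 z, fun z => hg2 z, fun i z => ?_⟩
  refine huniq _ _ (hg1 _) (hDproj _ (hg1 z) i) fun c hc => ?_
  show X.pair (g (proj X i z)) c = X.pair (proj X i (g z)) c
  rw [hg2 _ c hc, pair_proj_left X i z c, pair_proj_left X i (g z) c,
    hg2 _ _ (proj_mem_projSub X hC0g hc _)]

end HodgeAux8
section Statements

variable {A B : Type*} [AddCommGroup A] [Module ℝ A] [AddCommGroup B] [Module ℝ B]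
/-- relative Hodge decompositions exist and the symmetric projection
onto the subcomplex respects them. -/
theorem stmt8 (X : PairedComplex A) (hperf : X.Perfect)
    (Bsub : Submodule ℝ A) (hB : X.IsSubcomplex Bsub)
    (hqi : X.InclQuasiIso Bsub) (hBperf : X.SubPerfect Bsub) :
    ∃ H C : Submodule ℝ A, X.IsHodge H C ∧ X.IsHodgeOn Bsub (Bsub ⊓ H) (Bsub ⊓ C) ∧
      ∀ π : A →ₗ[ℝ] A, X.IsProjection π → X.IsSymmetric π →
        LinearMap.range π = Bsub → LinearMap.ker π = X.perp Bsub →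
        (∀ h ∈ H, π h ∈ Bsub ⊓ H) ∧ (∀ c ∈ C, π c ∈ Bsub ⊓ C) := by
  classical
  -- per-degree complements
  have hkerB_le : ∀ i : ℤ, (LinearMap.ker X.d ⊓ Bsub) ⊓ X.grading i
      ≤ Bsub ⊓ X.grading i := fun i y hy => ⟨hy.1.2, hy.2⟩
  choose C0 hC0le hC0inf hC0sup using fun i => exists_compl_le (hkerB_le i)
  have hC0g : ∀ i, C0 i ≤ X.grading i := fun i => (hC0le i).trans inf_le_right
  have hC0B : ∀ i, C0 i ≤ Bsub := fun i => (hC0le i).trans inf_le_left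
  have hkerBp_le : ∀ i : ℤ, (LinearMap.ker X.d ⊓ X.perp Bsub) ⊓ X.grading i
      ≤ X.perp Bsub ⊓ X.grading i := fun i y hy => ⟨hy.1.2, hy.2⟩
  choose C0p hC0ple hC0pinf hC0psup using fun i => exists_compl_le (hkerBp_le i)
  have hC0pg : ∀ i, C0p i ≤ X.grading i := fun i => (hC0ple i).trans inf_le_right
  have hC0pB : ∀ i, C0p i ≤ X.perp Bsub := fun i => (hC0ple i).trans inf_le_left
  -- the correction operators
  obtain ⟨γ, hγ1, hγ2, hγ3⟩ := buildGamma X (Submodule.map X.d Bsub) C0 hC0g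
    (fun x hx i => dB_proj X hB.1 hx i)
    (fun g g' hg hg' h => dRep_unique X Bsub hB hBperf hC0g hC0sup hg hg' h)
    (-(1/2))
    (fun z => dRep_exists X Bsub hB hBperf hC0g hC0B hC0inf hC0sup (-(1/2)) z)
  obtain ⟨γp, hγp1, hγp2, hγp3⟩ := buildGamma X (Submodule.map X.d (X.perp Bsub)) C0p
    hC0pg
    (fun x hx i => dB_proj X (perp_graded X hB.1) hx i)
    (fun g g' hg hg' h => pRep_unique X Bsub hperf hB hBperf hC0psup hC0pg hg hg' h)
    (-(1/2))
    (fun z => pRep_exists X Bsub hperf hB hBperf hqi hC0pg hC0pB hC0pinf hC0psup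
      (-(1/2)) z)
  -- derived facts about γ, γp
  have hγB : ∀ z, γ z ∈ Bsub := fun z => (dB_le_kerB X hB.2 (hγ1 z)).2
  have hγker : ∀ z, X.d (γ z) = 0 := fun z =>
    LinearMap.mem_ker.1 (dB_le_kerB X hB.2 (hγ1 z)).1
  have hγg : ∀ i z, z ∈ X.grading i → γ z ∈ X.grading i := by
    intro i z hz
    have h := hγ3 i z
    rw [proj_of_mem X hz] at h
    rw [h]
    exact proj_mem X i (γ z)
  have hγpBp : ∀ z, γp z ∈ X.perp Bsub := by
    intro z
    obtain ⟨w, hw, hwz⟩ := hγp1 z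
    rw [← hwz]
    exact d_mem_perp X hB.1 hB.2 hw
  have hγpker : ∀ z, X.d (γp z) = 0 := by
    intro z
    obtain ⟨w, hw, hwz⟩ := hγp1 z
    rw [← hwz]
    exact X.d_sq w
  have hγpg : ∀ i z, z ∈ X.grading i → γp z ∈ X.grading i := by
    intro i z hz
    have h := hγp3 i z
    rw [proj_of_mem X hz] at h
    rw [h]
    exact proj_mem X i (γp z)
  -- pairing with exact elements
  have hpair_d : ∀ (S : Submodule ℝ A) (x : A), x ∈ Submodule.map X.d S →
      ∀ k, X.d k = 0 → X.pair x k = 0 := by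
    rintro S x ⟨w, -, rfl⟩ k hk
    exact pair_d_ker X hk w
  have hpair_kd : ∀ (x : A), X.d x = 0 → ∀ (S : Submodule ℝ A) (y : A),
      y ∈ Submodule.map X.d S → X.pair x y = 0 := by
    rintro x hx S y ⟨w, -, rfl⟩
    exact pair_ker_d X hx w
  -- the subspaces
  set CB : Submodule ℝ A := Submodule.map (LinearMap.id + γ) (projSub X C0) with hCBdef
  set Cp : Submodule ℝ A := Submodule.map (LinearMap.id + γp) (projSub X C0p) with hCpdef
  set Hs : Submodule ℝ A := (LinearMap.ker X.d ⊓ Bsub) ⊓ X.perp CB with hHdef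
  set Cs : Submodule ℝ A := CB ⊔ Cp with hCsdef
  have hadd_apply : ∀ (f : A →ₗ[ℝ] A) (c : A),
      ((LinearMap.id : A →ₗ[ℝ] A) + f) c = c + f c := by
    intro f c
    simp
  -- membership and basic closure
  have hCB_B : CB ≤ Bsub := by
    rintro x ⟨c, hc, rfl⟩
    rw [hadd_apply]
    exact add_mem (projSub_le X hC0B hc) (hγB c)
  have hCp_Bp : Cp ≤ X.perp Bsub := by
    rintro x ⟨c, hc, rfl⟩
    rw [hadd_apply]
    exact add_mem (projSub_le X hC0pB hc) (hγpBp c)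
  have hCBproj : ∀ x ∈ CB, ∀ i, proj X i x ∈ CB := by
    rintro x ⟨c, hc, rfl⟩ i
    refine ⟨proj X i c, proj_mem_projSub X hC0g hc i, ?_⟩
    rw [hadd_apply, hadd_apply, hγ3 i c, map_add]
  have hCBg : X.IsGradedSubspace CB := isGraded_of_proj X hCBproj
  have hCpproj : ∀ x ∈ Cp, ∀ i, proj X i x ∈ Cp := by
    rintro x ⟨c, hc, rfl⟩ i
    refine ⟨proj X i c, proj_mem_projSub X hC0pg hc i, ?_⟩
    rw [hadd_apply, hadd_apply, hγp3 i c, map_add]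
  have hCpg : X.IsGradedSubspace Cp := isGraded_of_proj X hCpproj
  -- isotropy of CB
  have pair_gd : ∀ c ∈ projSub X C0, ∀ c' ∈ projSub X C0,
      X.pair c (γ c') = -(1/2) * X.pair c c' := by
    have hgr := projSub_graded X C0 hC0g
    have hmain := pair_ext_on X hgr hgr (X.pair.compl₂ γ) ((-(1/2) : ℝ) • X.pair) ?_
    · intro c hc c' hc'
      have h := hmain c hc c' hc'
      simpa using h
    · intro i j x hxS hxi y hyS hyj
      have hy' : γ y ∈ X.grading j := hγg j y hyj
      have e1 : X.pair x (γ y) = (-1 : ℝ) ^ (i * j) * X.pair (γ y) x :=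
        X.pair_symm i j x hxi _ hy'
      have e2 : X.pair (γ y) x = -(1/2) * X.pair y x := hγ2 y x hxS
      have e3 : X.pair x y = (-1 : ℝ) ^ (i * j) * X.pair y x :=
        X.pair_symm i j x hxi y hyj
      show (X.pair.compl₂ γ) x y = ((-(1/2) : ℝ) • X.pair) x y
      rw [LinearMap.compl₂_apply, LinearMap.smul_apply, LinearMap.smul_apply,
        smul_eq_mul, e1, e2, e3]
      ring
  have pair_gdp : ∀ c ∈ projSub X C0p, ∀ c' ∈ projSub X C0p,
      X.pair c (γp c') = -(1/2) * X.pair c c' := by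
    have hgr := projSub_graded X C0p hC0pg
    have hmain := pair_ext_on X hgr hgr (X.pair.compl₂ γp) ((-(1/2) : ℝ) • X.pair) ?_
    · intro c hc c' hc'
      have h := hmain c hc c' hc'
      simpa using h
    · intro i j x hxS hxi y hyS hyj
      have hy' : γp y ∈ X.grading j := hγpg j y hyj
      have e1 : X.pair x (γp y) = (-1 : ℝ) ^ (i * j) * X.pair (γp y) x :=
        X.pair_symm i j x hxi _ hy'
      have e2 : X.pair (γp y) x = -(1/2) * X.pair y x := hγp2 y x hxS
      have e3 : X.pair x y = (-1 : ℝ) ^ (i * j) * X.pair y x :=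
        X.pair_symm i j x hxi y hyj
      show (X.pair.compl₂ γp) x y = ((-(1/2) : ℝ) • X.pair) x y
      rw [LinearMap.compl₂_apply, LinearMap.smul_apply, LinearMap.smul_apply,
        smul_eq_mul, e1, e2, e3]
      ring
  have pair_expand4 : ∀ a b a' b' : A, X.pair (a + b) (a' + b')
      = X.pair a a' + X.pair a b' + X.pair b a' + X.pair b b' := by
    intro a b a' b'
    simp only [map_add, LinearMap.add_apply]
    ring
  have hCBiso : ∀ x ∈ CB, ∀ x' ∈ CB, X.pair x x' = 0 := by
    rintro x ⟨c, hc, rfl⟩ x' ⟨c', hc', rfl⟩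
    rw [hadd_apply, hadd_apply, pair_expand4,
      pair_gd c hc c' hc', hγ2 c c' hc',
      hpair_d _ _ (hγ1 c) _ (hγker c')]
    ring
  have hCpiso : ∀ x ∈ Cp, ∀ x' ∈ Cp, X.pair x x' = 0 := by
    rintro x ⟨c, hc, rfl⟩ x' ⟨c', hc', rfl⟩
    rw [hadd_apply, hadd_apply, pair_expand4,
      pair_gdp c hc c' hc', hγp2 c c' hc',
      hpair_d _ _ (hγp1 c) _ (hγpker c')]
    ring
  have hBBp : ∀ u ∈ Bsub, ∀ v ∈ X.perp Bsub, X.pair u v = 0 :=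
    fun u hu v hv => pair_perp_flip X hB.1 hu hv
  have hBpB : ∀ v ∈ X.perp Bsub, ∀ u ∈ Bsub, X.pair v u = 0 :=
    fun v hv u hu => hv u hu
  -- facts about Hs
  have hHB : Hs ≤ Bsub := fun x hx => hx.1.2
  have hHker : Hs ≤ LinearMap.ker X.d := fun x hx => hx.1.1
  have hHproj : ∀ x ∈ Hs, ∀ i, proj X i x ∈ Hs := by
    intro x hx i
    exact ⟨kerB_proj X Bsub hB hx.1 i, proj_mem_perp X hCBg hx.2 i⟩
  have hHg : X.IsGradedSubspace Hs := isGraded_of_proj X hHproj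
  have hbotBBp : ∀ x, x ∈ Bsub → x ∈ X.perp Bsub → x = 0 := by
    intro x h1 h2
    have : x ∈ Bsub ⊓ X.perp Bsub := ⟨h1, h2⟩
    rw [B_inf_perp X Bsub hBperf] at this
    simpa using this
  have hsplit : ∀ a : A, ∃ b ∈ Bsub, ∃ v ∈ X.perp Bsub, a = b + v := by
    intro a
    have : a ∈ Bsub ⊔ X.perp Bsub := by
      rw [B_sup_perp X Bsub hB hBperf]; trivial
    obtain ⟨b, hb, v, hv, hbv⟩ := Submodule.mem_sup.mp this
    exact ⟨b, hb, v, hv, hbv.symm⟩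
  -- Hs ∩ dB = 0
  have hHdB : ∀ x, x ∈ Hs → x ∈ Submodule.map X.d Bsub → x = 0 := by
    intro x hx hxd
    refine hBperf.1 x (hHB hx) (pair_B_zero X Bsub hB hC0g hC0sup ?_ ?_)
    · intro k hk
      exact hpair_d _ x hxd k (LinearMap.mem_ker.1 hk.1)
    · intro c hc
      have h1 : X.pair x (((LinearMap.id : A →ₗ[ℝ] A) + γ) c) = 0 := hx.2 _ ⟨c, hc, rfl⟩
      have h2 : X.pair x (γ c) = 0 := hpair_d _ x hxd (γ c) (hγker c)
      rw [hadd_apply, map_add, h2, add_zero] at h1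
      exact h1
  -- decomposition of kerB
  have hkerB_decomp : ∀ b ∈ LinearMap.ker X.d ⊓ Bsub,
      ∃ h ∈ Hs, ∃ e ∈ Submodule.map X.d Bsub, b = h + e := by
    intro b hb
    obtain ⟨e, he1, he2⟩ :=
      dRep_exists X Bsub hB hBperf hC0g hC0B hC0inf hC0sup 1 b
    have hde : X.d e = 0 := LinearMap.mem_ker.1 (dB_le_kerB X hB.2 he1).1
    refine ⟨b - e, ⟨⟨?_, sub_mem hb.2 (dB_le_kerB X hB.2 he1).2⟩, ?_⟩, e, he1, by abel⟩
    · exact LinearMap.mem_ker.2 (by rw [map_sub, LinearMap.mem_ker.1 hb.1, hde, sub_zero])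
    · rintro y ⟨c, hc, rfl⟩
      rw [hadd_apply]
      have e1 : X.pair b (γ c) = 0 := hpair_kd b (LinearMap.mem_ker.1 hb.1) _ _ (hγ1 c)
      have e2 : X.pair e (γ c) = 0 := hpair_d _ e he1 _ (hγker c)
      have e3 : X.pair e c = 1 * X.pair b c := he2 c hc
      have expand : X.pair (b - e) (c + γ c)
          = X.pair b c + X.pair b (γ c) - (X.pair e c + X.pair e (γ c)) := by
        simp only [map_sub, map_add, LinearMap.sub_apply]
        ring
      rw [expand, e1, e2, e3]
      ring
  -- CB ∩ ker d = 0
  have hCBker0 : ∀ u ∈ CB, X.d u = 0 → u = 0 := by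
    rintro u ⟨c, hc, rfl⟩ hdu
    rw [hadd_apply] at hdu ⊢
    have hdc : X.d c = 0 := by
      rw [map_add, hγker c, add_zero] at hdu
      exact hdu
    have hc0 : c = 0 := by
      have hbot : ∀ i, proj X i c ∈ (⊥ : Submodule ℝ A) := by
        intro i
        rw [← hC0inf i]
        exact ⟨⟨⟨LinearMap.mem_ker.2 (d_proj_eq_zero X hdc i),
          hC0B i (hc i)⟩, proj_mem X i c⟩, hc i⟩
      have := mem_of_proj X hbot
      simpa using this
    rw [hc0, map_zero, add_zero]
  have hCpker0 : ∀ u ∈ Cp, X.d u = 0 → u = 0 := by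
    rintro u ⟨c, hc, rfl⟩ hdu
    rw [hadd_apply] at hdu ⊢
    have hdc : X.d c = 0 := by
      rw [map_add, hγpker c, add_zero] at hdu
      exact hdu
    have hc0 : c = 0 := by
      have hbot : ∀ i, proj X i c ∈ (⊥ : Submodule ℝ A) := by
        intro i
        rw [← hC0pinf i]
        exact ⟨⟨⟨LinearMap.mem_ker.2 (d_proj_eq_zero X hdc i),
          hC0pB i (hc i)⟩, proj_mem X i c⟩, hc i⟩
      have := mem_of_proj X hbot
      simpa using this
    rw [hc0, map_zero, add_zero]
  -- B = CB + kerB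
  have hB_decomp : ∀ b ∈ Bsub, ∃ u ∈ CB, ∃ k ∈ LinearMap.ker X.d ⊓ Bsub,
      b = u + k := by
    intro b hb
    have hqdec : ∀ i, ∃ k c, k ∈ (LinearMap.ker X.d ⊓ Bsub) ⊓ X.grading i ∧
        c ∈ C0 i ∧ proj X i b = k + c := by
      intro i
      have : proj X i b ∈ ((LinearMap.ker X.d ⊓ Bsub) ⊓ X.grading i) ⊔ C0 i := by
        rw [hC0sup i]
        exact ⟨proj_mem_of_graded X hB.1 hb i, proj_mem X i b⟩
      obtain ⟨k, hk, c, hcc, hkc⟩ := Submodule.mem_sup.mp this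
      exact ⟨k, c, hk, hcc, hkc.symm⟩
    choose kk cc hkk hcc hsum using hqdec
    obtain ⟨s, hs0, hs⟩ := sum_proj X b
    have hcC : (∑ i ∈ s, cc i) ∈ projSub X C0 :=
      Submodule.sum_mem _ fun i _ => mem_projSub_of_mem X hC0g (hcc i)
    have hkK : (∑ i ∈ s, kk i) ∈ LinearMap.ker X.d ⊓ Bsub :=
      Submodule.sum_mem _ fun i _ => (hkk i).1
    have hbck : b = (∑ i ∈ s, kk i) + (∑ i ∈ s, cc i) := by
      rw [← hs, ← Finset.sum_add_distrib]
      exact Finset.sum_congr rfl fun i _ => hsum i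
    refine ⟨(∑ i ∈ s, cc i) + γ (∑ i ∈ s, cc i), ⟨_, hcC, (hadd_apply _ _).symm⟩,
      (∑ i ∈ s, kk i) - γ (∑ i ∈ s, cc i), ⟨?_, sub_mem hkK.2 (hγB _)⟩,
      by rw [hbck]; abel⟩
    exact LinearMap.mem_ker.2
      (by rw [map_sub, LinearMap.mem_ker.1 hkK.1, hγker, sub_zero])
  -- Bp = Cp + kerBp
  have hBp_decomp : ∀ v ∈ X.perp Bsub, ∃ u ∈ Cp,
      ∃ k ∈ LinearMap.ker X.d ⊓ X.perp Bsub, v = u + k := by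
    intro b hb
    have hqdec : ∀ i, ∃ k c, k ∈ (LinearMap.ker X.d ⊓ X.perp Bsub) ⊓ X.grading i ∧
        c ∈ C0p i ∧ proj X i b = k + c := by
      intro i
      have : proj X i b
          ∈ ((LinearMap.ker X.d ⊓ X.perp Bsub) ⊓ X.grading i) ⊔ C0p i := by
        rw [hC0psup i]
        exact ⟨proj_mem_perp X hB.1 hb i, proj_mem X i b⟩
      obtain ⟨k, hk, c, hcc, hkc⟩ := Submodule.mem_sup.mp this
      exact ⟨k, c, hk, hcc, hkc.symm⟩
    choose kk cc hkk hcc hsum using hqdec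
    obtain ⟨s, hs0, hs⟩ := sum_proj X b
    have hcC : (∑ i ∈ s, cc i) ∈ projSub X C0p :=
      Submodule.sum_mem _ fun i _ => mem_projSub_of_mem X hC0pg (hcc i)
    have hkK : (∑ i ∈ s, kk i) ∈ LinearMap.ker X.d ⊓ X.perp Bsub :=
      Submodule.sum_mem _ fun i _ => (hkk i).1
    have hbck : b = (∑ i ∈ s, kk i) + (∑ i ∈ s, cc i) := by
      rw [← hs, ← Finset.sum_add_distrib]
      exact Finset.sum_congr rfl fun i _ => hsum i
    refine ⟨(∑ i ∈ s, cc i) + γp (∑ i ∈ s, cc i), ⟨_, hcC, (hadd_apply _ _).symm⟩,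
      (∑ i ∈ s, kk i) - γp (∑ i ∈ s, cc i), ⟨?_, sub_mem hkK.2 (hγpBp _)⟩,
      by rw [hbck]; abel⟩
    exact LinearMap.mem_ker.2
      (by rw [map_sub, LinearMap.mem_ker.1 hkK.1, hγpker, sub_zero])
  -- Cs graded
  have hCsg : X.IsGradedSubspace Cs := by
    refine isGraded_of_proj X fun x hx i => ?_
    obtain ⟨u, hu, v, hv, huv⟩ := Submodule.mem_sup.mp hx
    rw [← huv, map_add]
    exact add_mem (Submodule.mem_sup_left (hCBproj u hu i))
      (Submodule.mem_sup_right (hCpproj v hv i))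
  -- pair flip for Hs / CB
  have hHCB : ∀ u ∈ CB, ∀ h ∈ Hs, X.pair u h = 0 :=
    pair_flip_zero X hHg hCBg (fun h hh u hu => hh.2 u hu)
  -- d splits across B ⊕ Bp
  have hdsplit : ∀ (b v : A), b ∈ Bsub → v ∈ X.perp Bsub → X.d (b + v) = 0 →
      X.d b = 0 ∧ X.d v = 0 := by
    intro b v hb hv hd
    rw [map_add] at hd
    have h1 : X.d b = -(X.d v) := eq_neg_of_add_eq_zero_left hd
    have h2 : X.d b = 0 := by
      refine hbotBBp _ (hB.2 b hb) ?_
      rw [h1]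
      exact neg_mem (d_mem_perp X hB.1 hB.2 hv)
    refine ⟨h2, ?_⟩
    rw [h2, zero_add] at hd
    exact hd
  -- ===== assembling the three goals =====
  refine ⟨Hs, Cs, ?_, ?_, ?_⟩
  · -- IsHodge Hs Cs
    refine ⟨le_top, le_top, hHg, hCsg, hHker, ?_, ?_, ?_, ?_, ?_, ?_⟩
    · -- Hs ⊓ map d ⊤ = ⊥
      rw [eq_bot_iff]
      rintro x ⟨hxH, hxd⟩
      rw [Submodule.map_top] at hxd
      obtain ⟨a, rfl⟩ := hxd
      obtain ⟨b, hb, v, hv, rfl⟩ := hsplit a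
      have hdv0 : X.d v = 0 := by
        refine hbotBBp _ ?_ (d_mem_perp X hB.1 hB.2 hv)
        have : X.d v = X.d (b + v) - X.d b := by rw [map_add]; abel
        rw [this]
        exact sub_mem (hHB hxH) (hB.2 b hb)
      have hxdB : X.d (b + v) ∈ Submodule.map X.d Bsub := by
        rw [map_add, hdv0, add_zero]
        exact ⟨b, hb, rfl⟩
      rw [Submodule.mem_bot]
      exact hHdB _ hxH hxdB
    · -- Hs ⊔ map d ⊤ = ker d ⊓ ⊤
      apply le_antisymm
      · refine sup_le (fun x hx => ⟨hHker hx, trivial⟩) ?_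
        rintro x ⟨a, -, rfl⟩
        exact ⟨LinearMap.mem_ker.2 (X.d_sq a), trivial⟩
      · rintro x ⟨hxk, -⟩
        obtain ⟨b, hb, v, hv, rfl⟩ := hsplit x
        obtain ⟨hdb, hdv⟩ := hdsplit b v hb hv (LinearMap.mem_ker.1 hxk)
        obtain ⟨h, hh, e, he, hbe⟩ := hkerB_decomp b ⟨LinearMap.mem_ker.2 hdb, hb⟩
        have hvdBp : v ∈ Submodule.map X.d (X.perp Bsub) := by
          rw [← kerBp_eq X Bsub hB hqi hBperf]
          exact ⟨LinearMap.mem_ker.2 hdv, hv⟩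
        obtain ⟨w, -, hwe⟩ := he
        obtain ⟨w', -, hwv⟩ := hvdBp
        have : b + v = h + X.d (w + w') := by
          rw [map_add, hwe, hwv, hbe]
          abel
        rw [this]
        refine add_mem (Submodule.mem_sup_left hh) (Submodule.mem_sup_right ?_)
        rw [Submodule.map_top]
        exact ⟨w + w', rfl⟩
    · -- Cs ⊓ ker d = ⊥
      rw [eq_bot_iff]
      rintro x ⟨hxC, hxk⟩
      obtain ⟨u, hu, v, hv, huv⟩ := Submodule.mem_sup.mp hxC
      obtain ⟨hdu, hdv⟩ := hdsplit u v (hCB_B hu) (hCp_Bp hv)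
        (by rw [huv]; exact LinearMap.mem_ker.1 hxk)
      rw [Submodule.mem_bot, ← huv, hCBker0 u hu hdu, hCpker0 v hv hdv, add_zero]
    · -- Cs ⊔ (ker d ⊓ ⊤) = ⊤
      rw [eq_top_iff]
      intro a _
      obtain ⟨b, hb, v, hv, rfl⟩ := hsplit a
      obtain ⟨u, hu, k, hk, hbuk⟩ := hB_decomp b hb
      obtain ⟨u', hu', k', hk', hvuk⟩ := hBp_decomp v hv
      have : b + v = (u + u') + (k + k') := by rw [hbuk, hvuk]; abel
      rw [this]
      refine add_mem (Submodule.mem_sup_left ?_) (Submodule.mem_sup_right ?_)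
      · exact add_mem (Submodule.mem_sup_left hu) (Submodule.mem_sup_right hu')
      · exact ⟨add_mem hk.1 hk'.1, trivial⟩
    · -- isotropy of Cs
      intro c hc c' hc'
      obtain ⟨u, hu, v, hv, huv⟩ := Submodule.mem_sup.mp hc
      obtain ⟨u', hu', v', hv', huv'⟩ := Submodule.mem_sup.mp hc'
      rw [← huv, ← huv', pair_expand4, hCBiso u hu u' hu', hCpiso v hv v' hv',
        hBBp u (hCB_B hu) v' (hCp_Bp hv'), hBpB v (hCp_Bp hv) u' (hCB_B hu')]
      ring
    · -- Cs ⊥ Hs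
      intro c hc h hh
      obtain ⟨u, hu, v, hv, huv⟩ := Submodule.mem_sup.mp hc
      rw [← huv, map_add, LinearMap.add_apply, hHCB u hu h hh,
        hBpB v (hCp_Bp hv) h (hHB hh), add_zero]
  · -- IsHodgeOn Bsub
    have hBH : Bsub ⊓ Hs = Hs := inf_eq_right.mpr hHB
    have hBC : Bsub ⊓ Cs = CB := by
      apply le_antisymm
      · rintro x ⟨hxB, hxC⟩
        obtain ⟨u, hu, v, hv, huv⟩ := Submodule.mem_sup.mp hxC
        have hv0 : v = 0 := by
          refine hbotBBp v ?_ (hCp_Bp hv)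
          have : v = x - u := by rw [← huv]; abel
          rw [this]
          exact sub_mem hxB (hCB_B hu)
        rw [← huv, hv0, add_zero]
        exact hu
      · exact le_inf hCB_B le_sup_left
    rw [hBH, hBC]
    refine ⟨hHB, hCB_B, hHg, hCBg, hHker, ?_, ?_, ?_, ?_, hCBiso, ?_⟩
    · -- Hs ⊓ map d Bsub = ⊥
      rw [eq_bot_iff]
      rintro x ⟨hxH, hxd⟩
      rw [Submodule.mem_bot]
      exact hHdB x hxH hxd
    · -- Hs ⊔ map d Bsub = ker d ⊓ Bsub
      apply le_antisymm
      · refine sup_le (fun x hx => hx.1) (dB_le_kerB X hB.2)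
      · intro x hx
        obtain ⟨h, hh, e, he, hbe⟩ := hkerB_decomp x hx
        rw [hbe]
        exact add_mem (Submodule.mem_sup_left hh) (Submodule.mem_sup_right he)
    · -- CB ⊓ ker d = ⊥
      rw [eq_bot_iff]
      rintro x ⟨hxC, hxk⟩
      rw [Submodule.mem_bot]
      exact hCBker0 x hxC (LinearMap.mem_ker.1 hxk)
    · -- CB ⊔ (ker d ⊓ Bsub) = Bsub
      apply le_antisymm
      · exact sup_le hCB_B inf_le_right
      · intro b hb
        obtain ⟨u, hu, k, hk, hbuk⟩ := hB_decomp b hb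
        rw [hbuk]
        exact add_mem (Submodule.mem_sup_left hu) (Submodule.mem_sup_right hk)
    · -- CB ⊥ Hs
      intro c hc h hh
      exact hHCB c hc h hh
  · -- the projection part
    intro π hproj hsym hrange hkerπ
    have hπB : ∀ b ∈ Bsub, π b = b := by
      intro b hb
      rw [← hrange, LinearMap.mem_range] at hb
      obtain ⟨a, rfl⟩ := hb
      exact hproj.2 a
    have hπBp : ∀ v ∈ X.perp Bsub, π v = 0 := by
      intro v hv
      rw [← hkerπ] at hv
      exact LinearMap.mem_ker.1 hv
    constructor
    · intro h hh
      rw [hπB h (hHB hh)]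
      exact ⟨hHB hh, hh⟩
    · intro c hc
      obtain ⟨u, hu, v, hv, huv⟩ := Submodule.mem_sup.mp hc
      rw [← huv, map_add, hπB u (hCB_B hu), hπBp v (hCp_Bp hv), add_zero]
      exact ⟨hCB_B hu, Submodule.mem_sup_left hu⟩

end Statements
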